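/- arXiv:1606.07125 — 7 statements merged into one kernel-verified Lean document; each statement's English description precedes it below -/
import Mathlib

section
/- For every natural number m, the degree of H_m(z) satisfies deg H_m ≤ ⌊m/r⌋. -/
/-- For every `m`, the degree of `H m` is at most `⌊m/r⌋`. -/
theorem degree_H_le
    (n r : ℕ) (hn : 0 < n) (hr : 0 < r)
    (P : Polynomial ℝ) (c : ℝ) (hc : c ≠ 0)
    (τv : Fin n → ℝ) (hτmono : Monotone τv) (hτpos : ∀ k, 0 < τv k)
    (hP : P = Polynomial.C c * ∏ k, (Polynomial.X - Polynomial.C (τv k)))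
    (hP0 : 0 < P.eval 0)
    (H : ℕ → Polynomial ℝ)
    (hH : PowerSeries.mk H *
        PowerSeries.mk (fun k => Polynomial.C (P.coeff k) +
          if k = r then (Polynomial.X : Polynomial ℝ) else 0) = 1) :
    ∀ m : ℕ, (H m).natDegree ≤ m / r := by
  set Q : ℕ → Polynomial ℝ := fun k => Polynomial.C (P.coeff k) +
      if k = r then (Polynomial.X : Polynomial ℝ) else 0 with hQ
  have ha0 : P.coeff 0 ≠ 0 := by
    rw [Polynomial.coeff_zero_eq_eval_zero]; exact ne_of_gt hP0
  have hQ0 : Q 0 = Polynomial.C (P.coeff 0) := by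
    simp only [hQ]
    rw [if_neg (by omega), add_zero]
  have hkey : ∀ m, (∑ i ∈ Finset.range (m+1), H i * Q (m-i)) =
      if m = 0 then 1 else 0 := by
    intro m
    have h := congrArg (PowerSeries.coeff (R := Polynomial ℝ) m) hH
    rw [PowerSeries.coeff_mul, Finset.Nat.sum_antidiagonal_eq_sum_range_succ_mk] at h
    simpa [PowerSeries.coeff_one, PowerSeries.coeff_mk] using h
  intro m
  induction m using Nat.strong_induction_on with
  | _ m ih =>
    rcases Nat.eq_zero_or_pos m with hm | hm
    · subst hm
      have h0 := hkey 0
      simp only [Nat.zero_add, Finset.sum_range_one, Nat.sub_self, hQ0, if_pos rfl] at h0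
      have hu : IsUnit (H 0) := IsUnit.of_mul_eq_one _ h0
      simp [Polynomial.natDegree_eq_zero_of_isUnit hu]
    · have h1 := hkey m
      rw [if_neg hm.ne', Finset.sum_range_succ, Nat.sub_self, hQ0] at h1
      have hHm : H m * Polynomial.C (P.coeff 0) =
          -∑ i ∈ Finset.range m, H i * Q (m - i) := by linear_combination h1
      have hHm' : H m = (-∑ i ∈ Finset.range m, H i * Q (m - i)) *
          Polynomial.C (P.coeff 0)⁻¹ := by
        rw [← hHm, mul_assoc, ← Polynomial.C_mul, mul_inv_cancel₀ ha0,
          Polynomial.C_1, mul_one]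
      rw [hHm']
      calc ((-∑ i ∈ Finset.range m, H i * Q (m - i)) *
              Polynomial.C (P.coeff 0)⁻¹).natDegree
          ≤ (-∑ i ∈ Finset.range m, H i * Q (m - i)).natDegree +
              (Polynomial.C (P.coeff 0)⁻¹).natDegree := Polynomial.natDegree_mul_le
        _ ≤ (∑ i ∈ Finset.range m, H i * Q (m - i)).natDegree := by
              rw [Polynomial.natDegree_neg, Polynomial.natDegree_C, add_zero]
        _ ≤ m / r := by
              apply Polynomial.natDegree_sum_le_of_forall_le
              intro i hi
              have hilt : i < m := Finset.mem_range.mp hi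
              have hHi := ih i hilt
              refine le_trans Polynomial.natDegree_mul_le ?_
              by_cases hcase : m - i = r
              · have hQr : (Q (m - i)).natDegree ≤ 1 := by
                  simp only [hQ, if_pos hcase]
                  refine le_trans (Polynomial.natDegree_add_le _ _) ?_
                  simp [Polynomial.natDegree_C, Polynomial.natDegree_X]
                have hmi : m = i + r := by omega
                have : i / r + 1 = m / r := by
                  rw [hmi, Nat.add_div_right i hr]
                omega
              · have hQmi : (Q (m - i)).natDegree = 0 := by
                  simp only [hQ, if_neg hcase, add_zero, Polynomial.natDegree_C]
                rw [hQmi, add_zero]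
                exact le_trans hHi (Nat.div_le_div_right hilt.le)
end

section
/- Let θ be a real number with sin θ ≠ 0 and let r be a positive integer. Then the polynomial S(τ) := P(τ e^{iθ}) − e^{2irθ} P(τ e^{−iθ}) in the variable τ is not identically zero, and all of its complex zeros are real and simple (pairwise distinct). -/
open Polynomial Complex Finset

private lemma aux_prod_lt {n : ℕ} (hn : 0 < n) (a b : Fin n → ℝ)
    (hb : ∀ k, 0 ≤ b k) (h : ∀ k, b k < a k) :
    ∏ k, b k < ∏ k, a k := by
  by_cases hz : ∃ k, b k = 0
  · obtain ⟨k, hk⟩ := hz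
    rw [Finset.prod_eq_zero (Finset.mem_univ k) hk]
    exact Finset.prod_pos (fun k _ => lt_of_le_of_lt (hb k) (h k))
  · push_neg at hz
    exact Finset.prod_lt_prod_of_nonempty
      (fun k _ => lt_of_le_of_ne (hb k) (Ne.symm (hz k)))
      (fun k _ => h k) ⟨⟨0, hn⟩, Finset.mem_univ _⟩

private lemma aux_deriv_prod {ι R : Type*} [CommSemiring R] [DecidableEq ι]
    (s : Finset ι) (f : ι → Polynomial R) :
    Polynomial.derivative (∏ i ∈ s, f i)
      = ∑ i ∈ s, (∏ j ∈ s.erase i, f j) * Polynomial.derivative (f i) := by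
  induction s using Finset.induction_on with
  | empty => simp
  | insert _ _ ha ih =>
    rename_i a s'
    rw [Finset.prod_insert ha, Polynomial.derivative_mul, ih, Finset.sum_insert ha,
      Finset.erase_insert ha, Finset.mul_sum]
    congr 1
    · exact mul_comm _ _
    · apply Finset.sum_congr rfl
      intro j hj
      rw [Finset.erase_insert_of_ne (by rintro rfl; exact ha hj),
        Finset.prod_insert (fun h => ha (Finset.mem_of_mem_erase h))]
      ring

private lemma aux_abs (θ : ℝ) (e e' : ℂ)
    (he : e = ⟨Real.cos θ, Real.sin θ⟩) (he' : e' = ⟨Real.cos θ, -Real.sin θ⟩)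
    (w : ℂ) (t : ℝ) :
    ‖e * w - (t:ℂ)‖ ^ 2
      = ‖e' * w - (t:ℂ)‖ ^ 2 + 4 * t * Real.sin θ * w.im := by
  subst he he'
  rw [Complex.sq_norm, Complex.sq_norm]
  simp [Complex.normSq_apply, Complex.mul_re, Complex.mul_im]
  nlinarith [Real.sin_sq_add_cos_sq θ]

private lemma aux_main {n : ℕ} (hn : 0 < n) (c : ℝ) (hc : c ≠ 0)
    (τv : Fin n → ℝ) (hτpos : ∀ k, 0 < τv k)
    (θ : ℝ) (hθ : Real.sin θ ≠ 0) (e e' ε : ℂ)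
    (he : e = ⟨Real.cos θ, Real.sin θ⟩) (he' : e' = ⟨Real.cos θ, -Real.sin θ⟩)
    (hε : ‖ε‖ = 1)
    (S : Polynomial ℂ)
    (hSe : ∀ w : ℂ, S.eval w =
      (c:ℂ) * ∏ k, (e * w - (τv k : ℂ)) - ε * ((c:ℂ) * ∏ k, (e' * w - (τv k : ℂ))))
    (hSd : ∀ w : ℂ, S.derivative.eval w =
      e * ((c:ℂ) * ∑ k, ∏ j ∈ Finset.univ.erase k, (e * w - (τv j : ℂ)))
      - ε * (e' * ((c:ℂ) * ∑ k, ∏ j ∈ Finset.univ.erase k, (e' * w - (τv j : ℂ))))) :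
    S ≠ 0 ∧ ∀ w : ℂ, S.eval w = 0 → w.im = 0 ∧ S.derivative.eval w ≠ 0 := by
  have hcc : (c:ℂ) ≠ 0 := Complex.ofReal_ne_zero.mpr hc
  have hconj_e : (starRingEnd ℂ) e = e' := by
    rw [he, he']; simp [Complex.ext_iff]
  have hee' : e * e' = 1 := by
    rw [he, he']
    simp only [Complex.ext_iff, Complex.mul_re, Complex.mul_im, Complex.one_re, Complex.one_im]
    constructor
    · nlinarith [Real.sin_sq_add_cos_sq θ]
    · ring
  -- realness of zeros
  have hprodeq : ∀ w : ℂ, S.eval w = 0 →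
      ∏ k, ‖e * w - (τv k : ℂ)‖ = ∏ k, ‖e' * w - (τv k : ℂ)‖ := by
    intro w hw
    have h0 : (c:ℂ) * ∏ k, (e * w - (τv k : ℂ))
        = ε * ((c:ℂ) * ∏ k, (e' * w - (τv k : ℂ))) := by
      have := hSe w; rw [hw] at this; exact (sub_eq_zero.mp this.symm)
    have h1 := congrArg (‖·‖) h0
    rw [norm_mul, norm_mul, norm_mul, hε, one_mul, norm_prod, norm_prod] at h1
    exact mul_left_cancel₀ (by simpa using hcc) h1
  have hreal : ∀ w : ℂ, S.eval w = 0 → w.im = 0 := by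
    intro w hw
    by_contra him
    have hprod := hprodeq w hw
    rcases (mul_ne_zero hθ him).lt_or_gt with hneg | hpos
    · -- sin θ * w.im < 0 : |e w - τ| < |e' w - τ|
      have hlt := aux_prod_lt hn (fun k => ‖e' * w - (τv k : ℂ)‖)
        (fun k => ‖e * w - (τv k : ℂ)‖)
        (fun k => norm_nonneg _)
        (fun k => by
          have h2 := aux_abs θ e e' he he' w (τv k)
          have h3 : 4 * (τv k) * Real.sin θ * w.im < 0 := by
            have := hτpos k; nlinarith
          apply lt_of_pow_lt_pow_left₀ 2 (norm_nonneg _)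
          nlinarith)
      rw [hprod] at hlt; exact lt_irrefl _ hlt
    · have hlt := aux_prod_lt hn (fun k => ‖e * w - (τv k : ℂ)‖)
        (fun k => ‖e' * w - (τv k : ℂ)‖)
        (fun k => norm_nonneg _)
        (fun k => by
          have h2 := aux_abs θ e e' he he' w (τv k)
          have h3 : 0 < 4 * (τv k) * Real.sin θ * w.im := by
            have := hτpos k; nlinarith
          apply lt_of_pow_lt_pow_left₀ 2 (norm_nonneg _)
          nlinarith)
      rw [hprod] at hlt; exact lt_irrefl _ hlt
  constructor
  · intro h0
    have : (Complex.I).im = 0 := hreal Complex.I (by rw [h0]; simp)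
    simp at this
  · intro w hw
    have him : w.im = 0 := hreal w hw
    refine ⟨him, fun hd => ?_⟩
    have hconj_w : (starRingEnd ℂ) w = w := Complex.conj_eq_iff_im.mpr him
    have hBA : ∀ k, e' * w - (τv k : ℂ) = (starRingEnd ℂ) (e * w - (τv k : ℂ)) := by
      intro k
      rw [map_sub, map_mul, hconj_e, hconj_w, Complex.conj_ofReal]
    have hA : ∀ k, e * w - (τv k : ℂ) ≠ 0 := by
      intro k hk
      have h1 : Real.sin θ * w.re = 0 := by
        have h2 := congrArg Complex.im hk
        simpa [Complex.mul_im, he, him] using h2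
      have hwre : w.re = 0 := by
        rcases mul_eq_zero.mp h1 with h | h
        · exact absurd h hθ
        · exact h
      have hw0 : w = 0 := Complex.ext hwre him
      rw [hw0, mul_zero, zero_sub, neg_eq_zero, Complex.ofReal_eq_zero] at hk
      exact absurd hk.symm (ne_of_lt (hτpos k))
    have hB : ∀ k, e' * w - (τv k : ℂ) ≠ 0 := by
      intro k; rw [hBA k]
      exact fun h0 => hA k (by simpa using congrArg (starRingEnd ℂ) h0)
    have hPA : ∏ k, (e * w - (τv k : ℂ)) ≠ 0 :=
      Finset.prod_ne_zero_iff.mpr (fun k _ => hA k)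
    have key0 : (c:ℂ) * ∏ k, (e * w - (τv k : ℂ))
        = ε * ((c:ℂ) * ∏ k, (e' * w - (τv k : ℂ))) := by
      have := hSe w; rw [hw] at this; exact (sub_eq_zero.mp this.symm)
    have herA : ∀ k : Fin n, ∏ j ∈ Finset.univ.erase k, (e * w - (τv j : ℂ))
        = (∏ j, (e * w - (τv j : ℂ))) * (e * w - (τv k : ℂ))⁻¹ := by
      intro k
      rw [← Finset.mul_prod_erase Finset.univ _ (Finset.mem_univ k),
        mul_comm (e * w - (τv k : ℂ)), mul_assoc, mul_inv_cancel₀ (hA k), mul_one]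
    have herB : ∀ k : Fin n, ∏ j ∈ Finset.univ.erase k, (e' * w - (τv j : ℂ))
        = (∏ j, (e' * w - (τv j : ℂ))) * (e' * w - (τv k : ℂ))⁻¹ := by
      intro k
      rw [← Finset.mul_prod_erase Finset.univ _ (Finset.mem_univ k),
        mul_comm (e' * w - (τv k : ℂ)), mul_assoc, mul_inv_cancel₀ (hB k), mul_one]
    have key1 : e * ((c:ℂ) * ((∏ k, (e * w - (τv k : ℂ))) * ∑ k, (e * w - (τv k : ℂ))⁻¹))
        = ε * (e' * ((c:ℂ) * ((∏ k, (e' * w - (τv k : ℂ))) * ∑ k, (e' * w - (τv k : ℂ))⁻¹))) := by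
      have h4 := hSd w; rw [hd] at h4
      have h5 := sub_eq_zero.mp h4.symm
      rw [Finset.sum_congr rfl (fun k _ => herA k), Finset.sum_congr rfl (fun k _ => herB k),
        ← Finset.mul_sum, ← Finset.mul_sum] at h5
      exact h5
    have key2 : ((c:ℂ) * ∏ k, (e * w - (τv k : ℂ))) * (e * ∑ k, (e * w - (τv k : ℂ))⁻¹)
        = ((c:ℂ) * ∏ k, (e * w - (τv k : ℂ))) * (e' * ∑ k, (e' * w - (τv k : ℂ))⁻¹) := by
      calc ((c:ℂ) * ∏ k, (e * w - (τv k : ℂ))) * (e * ∑ k, (e * w - (τv k : ℂ))⁻¹)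
          = e * ((c:ℂ) * ((∏ k, (e * w - (τv k : ℂ))) * ∑ k, (e * w - (τv k : ℂ))⁻¹)) := by ring
        _ = ε * (e' * ((c:ℂ) * ((∏ k, (e' * w - (τv k : ℂ))) * ∑ k, (e' * w - (τv k : ℂ))⁻¹))) := key1
        _ = (ε * ((c:ℂ) * ∏ k, (e' * w - (τv k : ℂ)))) * (e' * ∑ k, (e' * w - (τv k : ℂ))⁻¹) := by ring
        _ = ((c:ℂ) * ∏ k, (e * w - (τv k : ℂ))) * (e' * ∑ k, (e' * w - (τv k : ℂ))⁻¹) := by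
            rw [← key0]
    have key3 : e * ∑ k, (e * w - (τv k : ℂ))⁻¹ = e' * ∑ k, (e' * w - (τv k : ℂ))⁻¹ :=
      mul_left_cancel₀ (mul_ne_zero hcc hPA) key2
    have key4 : (starRingEnd ℂ) (e * ∑ k, (e * w - (τv k : ℂ))⁻¹)
        = e * ∑ k, (e * w - (τv k : ℂ))⁻¹ := by
      rw [map_mul, hconj_e, map_sum]
      rw [Finset.sum_congr rfl (fun k _ => by rw [map_inv₀, ← hBA k])]
      exact key3.symm
    have him0 : (e * ∑ k, (e * w - (τv k : ℂ))⁻¹).im = 0 :=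
      Complex.conj_eq_iff_im.mp key4
    have himterm : ∀ k : Fin n, (e * (e * w - (τv k : ℂ))⁻¹).im
        = -(Real.sin θ) * (τv k / Complex.normSq (e * w - (τv k : ℂ))) := by
      intro k
      rw [Complex.inv_def, ← mul_assoc]
      have h5 : e * (starRingEnd ℂ) (e * w - (τv k : ℂ)) = w - (τv k : ℂ) * e := by
        rw [← hBA k, mul_sub, ← mul_assoc, hee', one_mul]; ring
      rw [h5]
      simp [Complex.mul_im, Complex.sub_im, Complex.ofReal_im, Complex.ofReal_re,
        Complex.mul_re, he, him]
      field_simp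
    have hsum_im : (e * ∑ k, (e * w - (τv k : ℂ))⁻¹).im
        = -(Real.sin θ) * ∑ k, (τv k / Complex.normSq (e * w - (τv k : ℂ))) := by
      rw [Finset.mul_sum, Complex.im_sum, Finset.sum_congr rfl (fun k _ => himterm k),
        ← Finset.mul_sum]
    have hpos : 0 < ∑ k, τv k / Complex.normSq (e * w - (τv k : ℂ)) :=
      Finset.sum_pos (fun k _ => div_pos (hτpos k) (Complex.normSq_pos.mpr (hA k)))
        ⟨⟨0, hn⟩, Finset.mem_univ _⟩
    rw [hsum_im] at him0
    rcases mul_eq_zero.mp him0 with h | h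
    · exact hθ (neg_eq_zero.mp h)
    · exact ne_of_gt hpos h

/-- For real `θ` with `sin θ ≠ 0`, the polynomial
`S(τ) = P(τ e^{iθ}) - e^{2irθ} P(τ e^{-iθ})` is not identically zero and all of its complex
zeros are real and simple. -/
theorem zeros_S_real_simple
    (n r : ℕ) (hn : 0 < n) (hr : 0 < r)
    (P : Polynomial ℝ) (c : ℝ) (hc : c ≠ 0)
    (τv : Fin n → ℝ) (hτmono : Monotone τv) (hτpos : ∀ k, 0 < τv k)
    (hP : P = Polynomial.C c * ∏ k, (Polynomial.X - Polynomial.C (τv k)))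
    (θ : ℝ) (hθ : Real.sin θ ≠ 0)
    (S : Polynomial ℂ)
    (hS : S = (P.map (algebraMap ℝ ℂ)).comp
        (Polynomial.C (Complex.exp ((θ : ℂ) * Complex.I)) * Polynomial.X) -
      Polynomial.C (Complex.exp (2 * (r : ℂ) * (θ : ℂ) * Complex.I)) *
        (P.map (algebraMap ℝ ℂ)).comp
          (Polynomial.C (Complex.exp (-(θ : ℂ) * Complex.I)) * Polynomial.X)) :
    S ≠ 0 ∧ ∀ w : ℂ, S.eval w = 0 → w.im = 0 ∧ S.derivative.eval w ≠ 0 := by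
  set e := Complex.exp ((θ : ℂ) * Complex.I) with he_def
  set e' := Complex.exp (-(θ : ℂ) * Complex.I) with he'_def
  set ε := Complex.exp (2 * (r : ℂ) * (θ : ℂ) * Complex.I) with hε_def
  have he : e = ⟨Real.cos θ, Real.sin θ⟩ := by
    rw [he_def, Complex.exp_mul_I, ← Complex.ofReal_cos, ← Complex.ofReal_sin]
    simp [Complex.ext_iff, Complex.cos_ofReal_re, Complex.sin_ofReal_re]
  have he' : e' = ⟨Real.cos θ, -Real.sin θ⟩ := by
    have h : -(θ:ℂ) = ((-θ : ℝ) : ℂ) := by push_cast; ring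
    rw [he'_def, h, Complex.exp_mul_I, ← Complex.ofReal_cos, ← Complex.ofReal_sin]
    simp [Complex.ext_iff, Complex.cos_ofReal_re, Complex.sin_ofReal_re]
  have hε : ‖ε‖ = 1 := by
    have h : 2 * (r : ℂ) * (θ : ℂ) = ((2 * r * θ : ℝ) : ℂ) := by push_cast; ring
    rw [hε_def, h, Complex.norm_exp_ofReal_mul_I]
  have hQ : P.map (algebraMap ℝ ℂ) =
      Polynomial.C (c:ℂ) * ∏ k, (Polynomial.X - Polynomial.C ((τv k : ℂ))) := by
    rw [hP]
    simp [Polynomial.map_mul, Polynomial.map_prod, Polynomial.map_sub]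
  have hSe : ∀ w : ℂ, S.eval w =
      (c:ℂ) * ∏ k, (e * w - (τv k : ℂ)) - ε * ((c:ℂ) * ∏ k, (e' * w - (τv k : ℂ))) := by
    intro w
    rw [hS, hQ]
    simp [Polynomial.eval_comp, Polynomial.eval_prod]
  have hSd : ∀ w : ℂ, S.derivative.eval w =
      e * ((c:ℂ) * ∑ k, ∏ j ∈ Finset.univ.erase k, (e * w - (τv j : ℂ)))
      - ε * (e' * ((c:ℂ) * ∑ k, ∏ j ∈ Finset.univ.erase k, (e' * w - (τv j : ℂ)))) := by
    intro w
    have hD : Polynomial.derivative (∏ k : Fin n, (Polynomial.X - Polynomial.C ((τv k : ℂ)))) =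
        ∑ k : Fin n, ∏ j ∈ Finset.univ.erase k, (Polynomial.X - Polynomial.C ((τv j : ℂ))) := by
      rw [aux_deriv_prod]; simp
    rw [hS, hQ]
    simp [Polynomial.derivative_comp, hD, Polynomial.eval_comp,
      Polynomial.eval_prod, Polynomial.eval_finset_sum]
    ring
  exact aux_main hn c hc τv hτpos θ hθ e e' ε he he' hε S hSe hSd
end

section
/- For each fixed integer 0 ≤ l < n, the function θ ↦ z(θ; l) takes only real values and is strictly monotone (either strictly increasing throughout or strictly decreasing throughout) on the interval (0, π/r). -/
/-- A tuple `Θ = (θ_1, …, θ_n)` is admissible for `(θ, l)` if `θ < θ_k < π` for all `k`,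
`∑ θ_k = rθ + lπ`, and the quantities `τ_k sin θ_k / sin(θ_k - θ)` are all equal. -/
def IsAdmissible (n : ℕ) (τv : Fin n → ℝ) (r : ℕ) (θ : ℝ) (l : ℕ)
    (Θ : Fin n → ℝ) : Prop :=
  (∀ k, θ < Θ k ∧ Θ k < Real.pi) ∧
  (∑ k, Θ k = r * θ + l * Real.pi) ∧
  ∀ j k, τv j * Real.sin (Θ j) / Real.sin (Θ j - θ) =
    τv k * Real.sin (Θ k) / Real.sin (Θ k - θ)

section AuxZ
open Complex Set

lemma hasDerivAt_im_comp {f : ℝ → ℂ} {d : ℂ} {u : ℝ} (hf : HasDerivAt f d u) :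
    HasDerivAt (fun x => (f x).im) d.im u := by
  have := Complex.imCLM.hasFDerivAt.comp_hasDerivAt u hf
  exact this

lemma core_compare {F F' : ℂ → ℂ}
    (hd : ∀ ζ : ℂ, ζ.im ∈ Ioo (-Real.pi) 0 → HasDerivAt F (F' ζ) ζ)
    (him : ∀ ζ : ℂ, ζ.im ∈ Ioo (-Real.pi) 0 → 0 < (F' ζ).im)
    {ζ₁ ζ₂ : ℂ} (h1 : ζ₁.im ∈ Ioo (-Real.pi) 0) (h2 : ζ₂.im ∈ Ioo (-Real.pi) 0)
    (hlt : ζ₂.im < ζ₁.im) (heq : (F ζ₂).im = (F ζ₁).im) :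
    (F ζ₁).re < (F ζ₂).re := by
  set Δ : ℂ := ζ₂ - ζ₁ with hΔ
  have hΔim : Δ.im < 0 := by simp [hΔ, Complex.sub_im]; linarith
  have hseg : ∀ u : ℝ, u ∈ Icc (0:ℝ) 1 → (ζ₁ + (u:ℂ) * Δ).im ∈ Ioo (-Real.pi) 0 := by
    intro u hu
    have himp : (ζ₁ + (u:ℂ) * Δ).im = ζ₁.im + u * Δ.im := by
      simp [Complex.add_im, Complex.mul_im]
    rw [himp]
    obtain ⟨hu0, hu1⟩ := hu
    constructor
    · have h1' : ζ₁.im + u * Δ.im ≥ ζ₁.im + 1 * Δ.im := by nlinarith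
      have h2' : ζ₁.im + 1 * Δ.im = ζ₂.im := by simp [hΔ]
      nlinarith [h2.1]
    · nlinarith [h1.2]
  set φ : ℝ → ℝ := fun u => (F (ζ₁ + (u:ℂ) * Δ) * (starRingEnd ℂ) Δ).im with hφ
  have hder : ∀ u ∈ Icc (0:ℝ) 1,
      HasDerivAt φ ((F' (ζ₁ + (u:ℂ) * Δ) * Δ * (starRingEnd ℂ) Δ).im) u := by
    intro u hu
    have hin := hseg u hu
    have hinner : HasDerivAt (fun w : ℂ => ζ₁ + w * Δ) Δ ((u:ℝ) : ℂ) := by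
      simpa using ((hasDerivAt_id ((u:ℝ):ℂ)).mul_const Δ).const_add ζ₁
    have hcomp : HasDerivAt (fun w : ℂ => F (ζ₁ + w * Δ))
        (F' (ζ₁ + (u:ℂ) * Δ) * Δ) ((u:ℝ):ℂ) := by
      have := (hd _ hin).comp ((u:ℝ):ℂ) hinner
      exact this
    have hre : HasDerivAt (fun x : ℝ => F (ζ₁ + (x:ℂ) * Δ))
        (F' (ζ₁ + (u:ℂ) * Δ) * Δ) u := hcomp.comp_ofReal
    exact hasDerivAt_im_comp (hre.mul_const ((starRingEnd ℂ) Δ))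
  have hcont : ContinuousOn φ (Icc 0 1) := by
    intro u hu; exact ((hder u hu).continuousAt).continuousWithinAt
  have hpos : ∀ u ∈ interior (Icc (0:ℝ) 1), 0 < deriv φ u := by
    intro u hu
    rw [interior_Icc] at hu
    have hu' : u ∈ Icc (0:ℝ) 1 := Ioo_subset_Icc_self hu
    rw [(hder u hu').deriv]
    have hin := hseg u hu'
    have h1' := him _ hin
    have he1 : F' (ζ₁ + (u:ℂ) * Δ) * Δ * (starRingEnd ℂ) Δ
        = F' (ζ₁ + (u:ℂ) * Δ) * ((Complex.normSq Δ : ℝ) : ℂ) := by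
      rw [mul_assoc, Complex.mul_conj]
    rw [he1]
    have hΔ0 : Δ ≠ 0 := by
      intro h; rw [h] at hΔim; simp at hΔim
    have he2 : (F' (ζ₁ + (u:ℂ) * Δ) * ((Complex.normSq Δ : ℝ) : ℂ)).im
        = (F' (ζ₁ + (u:ℂ) * Δ)).im * Complex.normSq Δ := by
      simp [Complex.mul_im]
    rw [he2]
    exact mul_pos h1' (Complex.normSq_pos.mpr hΔ0)
  have hmono := strictMonoOn_of_deriv_pos (convex_Icc 0 1) hcont hpos
  have h01 : φ 0 < φ 1 := hmono (by norm_num) (by norm_num) (by norm_num)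
  have hφ0 : φ 0 = (F ζ₁ * (starRingEnd ℂ) Δ).im := by simp [hφ]
  have hφ1 : φ 1 = (F ζ₂ * (starRingEnd ℂ) Δ).im := by simp [hφ, hΔ]
  rw [hφ0, hφ1] at h01
  have hexp : (F ζ₂ * (starRingEnd ℂ) Δ).im - (F ζ₁ * (starRingEnd ℂ) Δ).im
      = ((F ζ₂).re - (F ζ₁).re) * (-Δ.im) := by
    simp [Complex.mul_im, Complex.conj_re, Complex.conj_im, heq]
    ring
  nlinarith [h01, hexp, hΔim]

lemma key_repr (τ τk θ θk : ℝ) (hsk : Real.sin θk ≠ 0)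
    (h : τk * Real.sin θk = τ * Real.sin (θk - θ)) :
    (τ:ℂ) * Complex.exp (-(θ:ℂ) * Complex.I) - (τk:ℂ)
      = ((τ * Real.sin θ / Real.sin θk : ℝ) : ℂ)
        * (↑(Real.cos (-θk)) + ↑(Real.sin (-θk)) * Complex.I) := by
  have h' : τ * (Real.sin θk * Real.cos θ - Real.cos θk * Real.sin θ)
      = τk * Real.sin θk := by
    rw [h, Real.sin_sub]
  have he : Complex.exp (-(θ:ℂ) * Complex.I)
      = (Real.cos θ : ℂ) - (Real.sin θ : ℂ) * Complex.I := by
    rw [Complex.exp_mul_I, Complex.cos_neg, Complex.sin_neg,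
      ← Complex.ofReal_cos, ← Complex.ofReal_sin]
    ring
  rw [he, Real.cos_neg, Real.sin_neg]
  rw [Complex.ext_iff]
  constructor
  · simp only [Complex.sub_re, Complex.add_re, Complex.mul_re, Complex.mul_im,
      Complex.ofReal_re, Complex.ofReal_im, Complex.I_re, Complex.I_im,
      Complex.ofReal_neg, Complex.neg_re, Complex.neg_im]
    field_simp
    nlinarith [h']
  · simp only [Complex.sub_im, Complex.add_im, Complex.mul_re, Complex.mul_im,
      Complex.ofReal_re, Complex.ofReal_im, Complex.I_re, Complex.I_im,
      Complex.ofReal_neg, Complex.neg_re, Complex.neg_im]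
    field_simp
    ring

end AuxZ

open Complex Set in
/-- For each fixed `0 ≤ l < n`, the function `θ ↦ z(θ; l)` is real-valued
and strictly monotone on `(0, π/r)`. -/
theorem z_real_strict_monotone
    (n r : ℕ) (hn : 0 < n) (hr : 0 < r) (hmax : 1 < max n r)
    (P : Polynomial ℝ) (c : ℝ) (hc : c ≠ 0)
    (τv : Fin n → ℝ) (hτmono : Monotone τv) (hτpos : ∀ k, 0 < τv k)
    (hP : P = Polynomial.C c * ∏ k, (Polynomial.X - Polynomial.C (τv k)))
    (hP0 : 0 < P.eval 0)
    (l : ℕ) (hl : l < n)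
    (Θf : ℝ → Fin n → ℝ)
    (hΘf : ∀ θ ∈ Set.Ioo (0 : ℝ) (Real.pi / r), IsAdmissible n τv r θ l (Θf θ))
    (τf : ℝ → ℝ)
    (hτf : ∀ θ ∈ Set.Ioo (0 : ℝ) (Real.pi / r), ∀ k,
      τv k * Real.sin (Θf θ k) / Real.sin (Θf θ k - θ) = τf θ)
    (zf : ℝ → ℂ)
    (hzf : ∀ θ ∈ Set.Ioo (0 : ℝ) (Real.pi / r),
      zf θ = -(Polynomial.aeval ((τf θ : ℂ) * Complex.exp (-(θ : ℂ) * Complex.I)) P) /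
        ((τf θ : ℂ) * Complex.exp (-(θ : ℂ) * Complex.I)) ^ r) :
    (∀ θ ∈ Set.Ioo (0 : ℝ) (Real.pi / r), (zf θ).im = 0) ∧
    (StrictMonoOn (fun θ => (zf θ).re) (Set.Ioo (0 : ℝ) (Real.pi / r)) ∨
     StrictAntiOn (fun θ => (zf θ).re) (Set.Ioo (0 : ℝ) (Real.pi / r))) := by
  haveI : Nonempty (Fin n) := ⟨⟨0, hn⟩⟩
  have hπ := Real.pi_pos
  have hπr : Real.pi / r ≤ Real.pi := by
    apply div_le_self hπ.le
    exact_mod_cast hr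
  -- the strip functions
  set L : ℂ → ℂ := fun ζ =>
    (∑ k, Complex.log (Complex.exp ζ - (τv k : ℂ))) - (r:ℂ) * ζ with hLdef
  set L' : ℂ → ℂ := fun ζ =>
    (∑ k, Complex.exp ζ / (Complex.exp ζ - (τv k : ℂ))) - (r:ℂ) with hL'def
  have hexpim : ∀ ζ : ℂ, ζ.im ∈ Ioo (-Real.pi) 0 → (Complex.exp ζ).im < 0 := by
    intro ζ hζ
    rw [Complex.exp_im]
    apply mul_neg_of_pos_of_neg (Real.exp_pos _)
    have h1 : 0 < Real.sin (-ζ.im) :=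
      Real.sin_pos_of_pos_of_lt_pi (by linarith [hζ.2]) (by linarith [hζ.1])
    rw [Real.sin_neg] at h1; linarith
  have hne : ∀ (ζ : ℂ), ζ.im ∈ Ioo (-Real.pi) 0 → ∀ k,
      Complex.exp ζ - (τv k : ℂ) ≠ 0 := by
    intro ζ hζ k h0
    have h1 : (Complex.exp ζ - (τv k : ℂ)).im < 0 := by
      simp only [Complex.sub_im, Complex.ofReal_im, sub_zero]
      exact hexpim ζ hζ
    rw [h0] at h1; simp at h1
  have hd : ∀ ζ : ℂ, ζ.im ∈ Ioo (-Real.pi) 0 → HasDerivAt L (L' ζ) ζ := by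
    intro ζ hζ
    have hterm : ∀ k, HasDerivAt (fun w : ℂ => Complex.log (Complex.exp w - (τv k : ℂ)))
        (Complex.exp ζ / (Complex.exp ζ - (τv k : ℂ))) ζ := by
      intro k
      have hslit : Complex.exp ζ - (τv k : ℂ) ∈ Complex.slitPlane := by
        right
        simp only [Complex.sub_im, Complex.ofReal_im, sub_zero]
        exact ne_of_lt (hexpim ζ hζ)
      have h1 := Complex.hasDerivAt_log hslit
      have h2 := (Complex.hasDerivAt_exp ζ).sub_const ((τv k : ℝ) : ℂ)
      have h3 := h1.comp ζ h2
      rw [div_eq_mul_inv, mul_comm]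
      exact h3
    have hsum := HasDerivAt.fun_sum (fun k (_ : k ∈ Finset.univ) => hterm k)
    have hlin : HasDerivAt (fun w : ℂ => (r:ℂ) * w) ((r:ℂ)) ζ := by
      simpa using (hasDerivAt_id ζ).const_mul (r:ℂ)
    exact hsum.sub hlin
  have him : ∀ ζ : ℂ, ζ.im ∈ Ioo (-Real.pi) 0 → 0 < (L' ζ).im := by
    intro ζ hζ
    have h1 : (L' ζ).im = ∑ k, (Complex.exp ζ / (Complex.exp ζ - (τv k : ℂ))).im := by
      simp [hL'def, Complex.im_sum]
    rw [h1]
    apply Finset.sum_pos _ Finset.univ_nonempty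
    intro k _
    have hb := hne ζ hζ k
    have h2 : (Complex.exp ζ / (Complex.exp ζ - (τv k : ℂ))).im
        = τv k * (-(Complex.exp ζ).im) / Complex.normSq (Complex.exp ζ - (τv k : ℂ)) := by
      rw [Complex.div_im]
      simp only [Complex.sub_re, Complex.sub_im, Complex.ofReal_re, Complex.ofReal_im,
        sub_zero]
      ring
    rw [h2]
    apply div_pos
    · exact mul_pos (hτpos k) (by linarith [hexpim ζ hζ])
    · exact Complex.normSq_pos.mpr hb
  -- the path in the strip
  set ζf : ℝ → ℂ := fun θ => ((Real.log (τf θ) : ℝ) : ℂ) + ((-θ : ℝ) : ℂ) * Complex.I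
    with hζfdef
  have hζim : ∀ θ : ℝ, (ζf θ).im = -θ := by
    intro θ; simp [hζfdef]
  -- basic positivity facts for θ in the interval
  have hθmem : ∀ θ ∈ Set.Ioo (0:ℝ) (Real.pi / r), 0 < θ ∧ θ < Real.pi := by
    intro θ hθ; exact ⟨hθ.1, lt_of_lt_of_le hθ.2 hπr⟩
  have hsinθ : ∀ θ ∈ Set.Ioo (0:ℝ) (Real.pi / r), 0 < Real.sin θ := by
    intro θ hθ; exact Real.sin_pos_of_pos_of_lt_pi (hθmem θ hθ).1 (hθmem θ hθ).2
  have hΘrange : ∀ θ ∈ Set.Ioo (0:ℝ) (Real.pi / r), ∀ k,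
      0 < Θf θ k ∧ Θf θ k < Real.pi ∧ θ < Θf θ k := by
    intro θ hθ k
    obtain ⟨h1, h2⟩ := (hΘf θ hθ).1 k
    exact ⟨lt_trans (hθmem θ hθ).1 h1, h2, h1⟩
  have hsinΘ : ∀ θ ∈ Set.Ioo (0:ℝ) (Real.pi / r), ∀ k, 0 < Real.sin (Θf θ k) := by
    intro θ hθ k
    obtain ⟨h1, h2, _⟩ := hΘrange θ hθ k
    exact Real.sin_pos_of_pos_of_lt_pi h1 h2
  have hsinsub : ∀ θ ∈ Set.Ioo (0:ℝ) (Real.pi / r), ∀ k,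
      0 < Real.sin (Θf θ k - θ) := by
    intro θ hθ k
    obtain ⟨h1, h2, h3⟩ := hΘrange θ hθ k
    apply Real.sin_pos_of_pos_of_lt_pi (by linarith)
    have := (hθmem θ hθ).1; linarith
  have hτfpos : ∀ θ ∈ Set.Ioo (0:ℝ) (Real.pi / r), 0 < τf θ := by
    intro θ hθ
    rw [← hτf θ hθ ⟨0, hn⟩]
    exact div_pos (mul_pos (hτpos _) (hsinΘ θ hθ _)) (hsinsub θ hθ _)
  have hmul : ∀ θ ∈ Set.Ioo (0:ℝ) (Real.pi / r), ∀ k,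
      τv k * Real.sin (Θf θ k) = τf θ * Real.sin (Θf θ k - θ) := by
    intro θ hθ k
    have := hτf θ hθ k
    field_simp [ne_of_gt (hsinsub θ hθ k)] at this
    linarith
  have hexpζ : ∀ θ ∈ Set.Ioo (0:ℝ) (Real.pi / r),
      Complex.exp (ζf θ) = (τf θ : ℂ) * Complex.exp (-(θ:ℂ) * Complex.I) := by
    intro θ hθ
    rw [hζfdef]
    simp only
    rw [Complex.exp_add, ← Complex.ofReal_exp, Real.exp_log (hτfpos θ hθ)]
    congr 1
    push_cast
    ring_nf
  have hrepr : ∀ θ ∈ Set.Ioo (0:ℝ) (Real.pi / r), ∀ k,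
      (τf θ : ℂ) * Complex.exp (-(θ:ℂ) * Complex.I) - (τv k : ℂ)
        = ((τf θ * Real.sin θ / Real.sin (Θf θ k) : ℝ) : ℂ)
          * (↑(Real.cos (-(Θf θ k))) + ↑(Real.sin (-(Θf θ k))) * Complex.I) := by
    intro θ hθ k
    exact key_repr (τf θ) (τv k) θ (Θf θ k) (ne_of_gt (hsinΘ θ hθ k)) (hmul θ hθ k)
  have harg : ∀ θ ∈ Set.Ioo (0:ℝ) (Real.pi / r), ∀ k,
      ((τf θ : ℂ) * Complex.exp (-(θ:ℂ) * Complex.I) - (τv k : ℂ)).arg = -(Θf θ k) := by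
    intro θ hθ k
    rw [hrepr θ hθ k, Complex.ofReal_cos, Complex.ofReal_sin]
    have hRpos : 0 < τf θ * Real.sin θ / Real.sin (Θf θ k) :=
      div_pos (mul_pos (hτfpos θ hθ) (hsinθ θ hθ)) (hsinΘ θ hθ k)
    apply Complex.arg_mul_cos_add_sin_mul_I hRpos
    obtain ⟨h1, h2, _⟩ := hΘrange θ hθ k
    constructor <;> [linarith; linarith]
  have htne : ∀ θ ∈ Set.Ioo (0:ℝ) (Real.pi / r), ∀ k,
      (τf θ : ℂ) * Complex.exp (-(θ:ℂ) * Complex.I) - (τv k : ℂ) ≠ 0 := by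
    intro θ hθ k h0
    have h1 : (((τf θ : ℂ) * Complex.exp (-(θ:ℂ) * Complex.I) - (τv k : ℂ))).im < 0 := by
      have he : (-(θ:ℂ) * Complex.I) = ((-θ : ℝ) : ℂ) * Complex.I := by push_cast; ring
      rw [Complex.sub_im, he, Complex.mul_im, Complex.exp_ofReal_mul_I_re,
        Complex.exp_ofReal_mul_I_im]
      simp only [Complex.ofReal_re, Complex.ofReal_im, zero_mul, add_zero, sub_zero,
        Real.sin_neg]
      nlinarith [hτfpos θ hθ, hsinθ θ hθ]
    rw [h0] at h1; simp at h1
  have hζstrip : ∀ θ ∈ Set.Ioo (0:ℝ) (Real.pi / r), (ζf θ).im ∈ Ioo (-Real.pi) 0 := by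
    intro θ hθ
    rw [hζim θ]
    exact ⟨by linarith [(hθmem θ hθ).2], by linarith [(hθmem θ hθ).1]⟩
  have hImL : ∀ θ ∈ Set.Ioo (0:ℝ) (Real.pi / r),
      (L (ζf θ)).im = -(l * Real.pi) := by
    intro θ hθ
    have hsum := (hΘf θ hθ).2.1
    rw [hLdef]
    simp only
    rw [Complex.sub_im, Complex.im_sum]
    have h1 : ∀ k : Fin n, (Complex.log (Complex.exp (ζf θ) - (τv k : ℂ))).im
        = -(Θf θ k) := by
      intro k
      rw [hexpζ θ hθ, Complex.log_im]
      exact harg θ hθ k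
    rw [Finset.sum_congr rfl (fun k _ => h1 k)]
    have h2 : ((r:ℂ) * ζf θ).im = (r : ℝ) * (-θ) := by
      rw [Complex.mul_im]
      simp [hζim θ]
    rw [h2, Finset.sum_neg_distrib, hsum]
    ring
  have hzval : ∀ θ ∈ Set.Ioo (0:ℝ) (Real.pi / r),
      zf θ = -((c:ℂ) * Complex.exp (L (ζf θ))) := by
    intro θ hθ
    set t : ℂ := (τf θ : ℂ) * Complex.exp (-(θ:ℂ) * Complex.I) with htdef
    have haeval : Polynomial.aeval t P = (c:ℂ) * ∏ k, (t - (τv k : ℂ)) := by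
      rw [hP]
      simp [Polynomial.aeval_C, Polynomial.aeval_X, map_prod, map_mul, map_sub,
        Complex.coe_algebraMap]
    have hprod : ∏ k, (t - (τv k : ℂ))
        = Complex.exp (∑ k, Complex.log (t - (τv k : ℂ))) := by
      rw [Complex.exp_sum]
      exact Finset.prod_congr rfl fun k _ => (Complex.exp_log (htne θ hθ k)).symm
    have hLθ : L (ζf θ) = (∑ k, Complex.log (t - (τv k : ℂ))) - (r:ℂ) * ζf θ := by
      rw [hLdef]
      simp only
      rw [hexpζ θ hθ]
    have hpow : t ^ r = Complex.exp ((r:ℂ) * ζf θ) := by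
      rw [Complex.exp_nat_mul, hexpζ θ hθ]
    rw [hzf θ hθ, haeval, hprod, hpow, hLθ, Complex.exp_sub]
    have hne' := Complex.exp_ne_zero ((r:ℂ) * ζf θ)
    field_simp
  have him0 : ∀ θ ∈ Set.Ioo (0:ℝ) (Real.pi / r), (zf θ).im = 0 := by
    intro θ hθ
    rw [hzval θ hθ]
    rw [Complex.neg_im, Complex.mul_im]
    simp only [Complex.ofReal_re, Complex.ofReal_im, zero_mul, add_zero]
    rw [Complex.exp_im, hImL θ hθ]
    rw [Real.sin_neg, Real.sin_nat_mul_pi]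
    ring
  refine ⟨him0, ?_⟩
  set K : ℝ := -c * Real.cos (l * Real.pi) with hKdef
  have hre : ∀ θ ∈ Set.Ioo (0:ℝ) (Real.pi / r),
      (zf θ).re = K * Real.exp ((L (ζf θ)).re) := by
    intro θ hθ
    rw [hzval θ hθ]
    rw [Complex.neg_re, Complex.mul_re]
    simp only [Complex.ofReal_re, Complex.ofReal_im, zero_mul, sub_zero]
    rw [Complex.exp_re, hImL θ hθ, Real.cos_neg]
    rw [hKdef]
    ring
  have hK0 : K ≠ 0 := by
    have hs : Real.sin ((l:ℝ) * Real.pi) = 0 := Real.sin_nat_mul_pi l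
    have hsc := Real.sin_sq_add_cos_sq ((l:ℝ) * Real.pi)
    rw [hs] at hsc
    have hcos : Real.cos ((l:ℝ) * Real.pi) ≠ 0 := by
      intro h; rw [h] at hsc; norm_num at hsc
    rw [hKdef]
    exact mul_ne_zero (neg_ne_zero.mpr hc) hcos
  have gmono : ∀ θ₁ ∈ Set.Ioo (0:ℝ) (Real.pi / r), ∀ θ₂ ∈ Set.Ioo (0:ℝ) (Real.pi / r),
      θ₁ < θ₂ → (L (ζf θ₁)).re < (L (ζf θ₂)).re := by
    intro θ₁ hθ₁ θ₂ hθ₂ hlt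
    apply core_compare hd him (hζstrip θ₁ hθ₁) (hζstrip θ₂ hθ₂)
    · rw [hζim θ₁, hζim θ₂]; linarith
    · rw [hImL θ₁ hθ₁, hImL θ₂ hθ₂]
  rcases lt_or_gt_of_ne hK0 with hKneg | hKpos
  · right
    intro a ha b hb hab
    simp only
    rw [hre a ha, hre b hb]
    have := Real.exp_lt_exp.mpr (gmono a ha b hb hab)
    nlinarith [Real.exp_pos ((L (ζf a)).re), Real.exp_pos ((L (ζf b)).re)]
  · left
    intro a ha b hb hab
    simp only
    rw [hre a ha, hre b hb]
    have := Real.exp_lt_exp.mpr (gmono a ha b hb hab)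
    nlinarith
end

section
/- Assume (n, r) ≠ (2, 1). Then the function θ ↦ τ(θ) (the common value associated with the admissible tuple for (θ, n − 1)) is strictly monotone decreasing on the interval (0, π/r). -/
open Real Set

private lemma two_sin_mul_cos (A B : ℝ) : 2 * sin A * cos B = sin (A+B) + sin (A-B) := by
  rw [sin_add, sin_sub]; ring

private lemma merge_diff (a b α : ℝ) :
    (sin (2*a+α) + sin (2*b+α)) - (sin (2*(a+b)+α) + sin α)
      = 2 * sin (a+b+α) * (2 * sin a * sin b) := by
  have h1 := two_sin_mul_cos (a+b+α) (a-b)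
  have h2 := two_sin_mul_cos (a+b+α) (a+b)
  have e1 : sin ((a+b+α)+(a-b)) = sin (2*a+α) := by ring_nf
  have e2 : sin ((a+b+α)-(a-b)) = sin (2*b+α) := by ring_nf
  have e3 : sin ((a+b+α)+(a+b)) = sin (2*(a+b)+α) := by ring_nf
  have e4 : sin ((a+b+α)-(a+b)) = sin α := by ring_nf
  have h3 : cos (a-b) - cos (a+b) = 2 * sin a * sin b := by rw [cos_sub, cos_add]; ring
  rw [e1, e2] at h1
  rw [e3, e4] at h2
  linear_combination -h1 + h2 + 2 * sin (a+b+α) * h3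

private lemma pair_merge {a b α : ℝ} (ha : 0 ≤ a) (hb : 0 ≤ b) (hα : 0 < α)
    (hs : a + b + α ≤ π) :
    sin (2*(a+b)+α) + sin α ≤ sin (2*a+α) + sin (2*b+α) := by
  have h := merge_diff a b α
  have hS : 0 ≤ sin (a+b+α) := sin_nonneg_of_nonneg_of_le_pi (by linarith) hs
  have hsa : 0 ≤ sin a := sin_nonneg_of_nonneg_of_le_pi ha (by linarith)
  have hsb : 0 ≤ sin b := sin_nonneg_of_nonneg_of_le_pi hb (by linarith)
  nlinarith [mul_nonneg hS (mul_nonneg hsa hsb)]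

private lemma pair_merge_strict {a b α : ℝ} (ha : 0 < a) (hb : 0 < b) (hα : 0 < α)
    (hs : a + b + α < π) :
    sin (2*(a+b)+α) + sin α < sin (2*a+α) + sin (2*b+α) := by
  have h := merge_diff a b α
  have hS : 0 < sin (a+b+α) := sin_pos_of_pos_of_lt_pi (by linarith) hs
  have hsa : 0 < sin a := sin_pos_of_pos_of_lt_pi ha (by linarith)
  have hsb : 0 < sin b := sin_pos_of_pos_of_lt_pi hb (by linarith)
  nlinarith [mul_pos hS (mul_pos hsa hsb)]

/-- Lemma A, nonstrict. -/
private lemma lemA : ∀ (n : ℕ) (ψ : Fin n → ℝ) (α : ℝ), 0 < α → (∀ k, 0 < ψ k) →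
    (∑ k, ψ k) + α ≤ π →
    sin (2*(∑ k, ψ k)+α) + ((n:ℝ) - 1) * sin α ≤ ∑ k, sin (2*ψ k+α) := by
  intro n
  induction n with
  | zero => intro ψ α hα hψ hs; simp
  | succ m ih =>
    intro ψ α hα hψ hs
    have hsplit : ∑ k, ψ k = (∑ k : Fin m, ψ k.castSucc) + ψ (Fin.last m) :=
      Fin.sum_univ_castSucc (f := ψ)
    set T := ∑ k : Fin m, ψ k.castSucc with hT
    have hT0 : 0 ≤ T := Finset.sum_nonneg fun k _ => (hψ _).le
    have hlast : 0 < ψ (Fin.last m) := hψ _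
    have hs' : T + ψ (Fin.last m) + α ≤ π := by rw [hsplit] at hs; linarith
    have ihm : sin (2*T+α) + ((m:ℝ) - 1) * sin α ≤ ∑ k : Fin m, sin (2*ψ k.castSucc+α) := by
      apply ih _ α hα (fun k => hψ _); linarith
    have hmerge := pair_merge (a := T) (b := ψ (Fin.last m)) hT0 hlast.le hα hs'
    rw [hsplit, Fin.sum_univ_castSucc (f := fun k => sin (2*ψ k+α))]
    push_cast
    linarith

/-- Lemma A, strict, n ≥ 2 and strict angle bound. -/
private lemma lemA2 (n : ℕ) (hn : 2 ≤ n) (ψ : Fin n → ℝ) (α : ℝ) (hα : 0 < α)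
    (hψ : ∀ k, 0 < ψ k) (hs : (∑ k, ψ k) + α < π) :
    sin (2*(∑ k, ψ k)+α) + ((n:ℝ) - 1) * sin α < ∑ k, sin (2*ψ k+α) := by
  obtain ⟨m, rfl⟩ : ∃ m, n = m + 1 := ⟨n - 1, by omega⟩
  have hm : 1 ≤ m := by omega
  have hsplit : ∑ k, ψ k = (∑ k : Fin m, ψ k.castSucc) + ψ (Fin.last m) :=
    Fin.sum_univ_castSucc (f := ψ)
  set T := ∑ k : Fin m, ψ k.castSucc with hT
  have hT0 : 0 < T := by
    have : (Finset.univ : Finset (Fin m)).Nonempty := by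
      simp [Finset.univ_nonempty_iff, ← Fin.pos_iff_nonempty]; omega
    exact Finset.sum_pos (fun k _ => hψ _) this
  have hlast : 0 < ψ (Fin.last m) := hψ _
  have hs' : T + ψ (Fin.last m) + α < π := by rw [hsplit] at hs; linarith
  have ihm : sin (2*T+α) + ((m:ℝ) - 1) * sin α ≤ ∑ k : Fin m, sin (2*ψ k.castSucc+α) :=
    lemA m _ α hα (fun k => hψ _) (by linarith)
  have hmerge := pair_merge_strict (a := T) (b := ψ (Fin.last m)) hT0 hlast hα hs'
  rw [hsplit, Fin.sum_univ_castSucc (f := fun k => sin (2*ψ k+α))]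
  push_cast
  linarith

/-- Lemma A, strict, n ≥ 3 (allows sum + α = π). -/
private lemma lemA3 (n : ℕ) (hn : 3 ≤ n) (ψ : Fin n → ℝ) (α : ℝ) (hα : 0 < α)
    (hψ : ∀ k, 0 < ψ k) (hs : (∑ k, ψ k) + α ≤ π) :
    sin (2*(∑ k, ψ k)+α) + ((n:ℝ) - 1) * sin α < ∑ k, sin (2*ψ k+α) := by
  obtain ⟨m, rfl⟩ : ∃ m, n = m + 1 := ⟨n - 1, by omega⟩
  have hm : 2 ≤ m := by omega
  have hsplit : ∑ k, ψ k = (∑ k : Fin m, ψ k.castSucc) + ψ (Fin.last m) :=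
    Fin.sum_univ_castSucc (f := ψ)
  set T := ∑ k : Fin m, ψ k.castSucc with hT
  have hT0 : 0 < T := by
    have : (Finset.univ : Finset (Fin m)).Nonempty := by
      simp [Finset.univ_nonempty_iff, ← Fin.pos_iff_nonempty]; omega
    exact Finset.sum_pos (fun k _ => hψ _) this
  have hlast : 0 < ψ (Fin.last m) := hψ _
  have hs' : T + ψ (Fin.last m) + α ≤ π := by rw [hsplit] at hs; linarith
  have ihm : sin (2*T+α) + ((m:ℝ) - 1) * sin α < ∑ k : Fin m, sin (2*ψ k.castSucc+α) :=
    lemA2 m hm _ α hα (fun k => hψ _) (by linarith)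
  have hmerge := pair_merge (a := T) (b := ψ (Fin.last m)) hT0.le hlast.le hα hs'
  rw [hsplit, Fin.sum_univ_castSucc (f := fun k => sin (2*ψ k+α))]
  push_cast
  linarith

private lemma abs_sin_nat_mul (α : ℝ) (hα : 0 ≤ sin α) :
    ∀ m : ℕ, |sin (m*α)| ≤ m * sin α := by
  intro m
  induction m with
  | zero => simp
  | succ k ih =>
    have h : sin ((k+1 : ℕ)*α) = sin (k*α) * cos α + cos (k*α) * sin α := by
      push_cast; rw [show ((k:ℝ)+1)*α = k*α + α by ring, sin_add]
    rw [h]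
    calc |sin (k*α) * cos α + cos (k*α) * sin α|
        ≤ |sin (k*α) * cos α| + |cos (k*α) * sin α| := abs_add_le _ _
      _ ≤ |sin (k*α)| * 1 + 1 * sin α := by
          rw [abs_mul, abs_mul, abs_of_nonneg hα]
          have h1 := abs_cos_le_one α
          have h2 := abs_cos_le_one ((k:ℝ)*α)
          have h3 := abs_nonneg (sin ((k:ℝ)*α))
          have h4 := abs_nonneg (cos ((k:ℝ)*α))
          nlinarith
      _ ≤ (k:ℝ) * sin α + 1 * sin α := by linarith
      _ = ((k+1 : ℕ):ℝ) * sin α := by push_cast; ring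

private lemma sin_nat_mul_lt (m : ℕ) (hm : 2 ≤ m) (α : ℝ) (h0 : 0 < α) (hπ : α < π) :
    sin (m*α) < m * sin α := by
  have hsα : 0 < sin α := sin_pos_of_pos_of_lt_pi h0 hπ
  have hcos : |cos α| < 1 := by
    have := sin_sq_add_cos_sq α
    rw [abs_lt]
    constructor <;> nlinarith
  obtain ⟨k, rfl⟩ : ∃ k, m = k + 1 := ⟨m - 1, by omega⟩
  have hk : 1 ≤ k := by omega
  have hprev := abs_sin_nat_mul α hsα.le k
  have h : sin ((k+1 : ℕ)*α) = sin (k*α) * cos α + cos (k*α) * sin α := by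
    push_cast; rw [show ((k:ℝ)+1)*α = k*α + α by ring, sin_add]
  rw [h]
  have habs : sin (k*α) * cos α + cos (k*α) * sin α
      ≤ |sin (k*α)| * |cos α| + |cos (k*α)| * sin α := by
    have := abs_mul (sin ((k:ℝ)*α)) (cos α)
    have := abs_mul (cos ((k:ℝ)*α)) (sin α)
    have := le_abs_self (sin ((k:ℝ)*α) * cos α)
    have := le_abs_self (cos ((k:ℝ)*α) * sin α)
    have : |cos ((k:ℝ)*α) * sin α| = |cos ((k:ℝ)*α)| * sin α := by
      rw [abs_mul, abs_of_nonneg hsα.le]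
    nlinarith [le_abs_self (sin ((k:ℝ)*α) * cos α), le_abs_self (cos ((k:ℝ)*α) * sin α),
      abs_mul (sin ((k:ℝ)*α)) (cos α)]
  rcases eq_or_lt_of_le (abs_nonneg (sin ((k:ℝ)*α))) with hz | hz
  · -- |sin kα| = 0
    have hc1 : |cos ((k:ℝ)*α)| ≤ 1 := abs_cos_le_one _
    have : |sin (k*α)| * |cos α| = 0 := by rw [← hz]; ring
    have h2 : |cos ((k:ℝ)*α)| * sin α ≤ 1 * sin α :=
      mul_le_mul_of_nonneg_right hc1 hsα.le
    have hk' : (1:ℝ) ≤ (k:ℕ) := by exact_mod_cast hk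
    push_cast at habs this h2 ⊢
    nlinarith
  · have h1 : |sin (k*α)| * |cos α| < |sin (k*α)| * 1 := by
      exact mul_lt_mul_of_pos_left hcos hz
    have h2 : |cos ((k:ℝ)*α)| * sin α ≤ 1 * sin α :=
      mul_le_mul_of_nonneg_right (abs_cos_le_one _) hsα.le
    have hk' : (1:ℝ) ≤ (k:ℕ) := by exact_mod_cast hk
    push_cast at habs hprev h1 h2 ⊢
    nlinarith

private lemma key_ineq (n r : ℕ) (hn : 1 ≤ n) (hr : 1 ≤ r) (hbig : 2 ≤ r ∨ 3 ≤ n)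
    (t : ℝ) (ht : 0 < t) (htr : t < π / r) (Θ : Fin n → ℝ)
    (hΘ : ∀ k, 0 < Θ k ∧ Θ k < π)
    (hsum : ∑ k, Θ k = r * t + ((n:ℝ) - 1) * π) :
    ∑ k, sin (2 * Θ k - t) + n * sin t < 2 * r * sin t := by
  have hrR : (1:ℝ) ≤ r := by exact_mod_cast hr
  have hrt : (r:ℝ) * t < π := by
    rw [lt_div_iff₀ (by positivity : (0:ℝ) < (r:ℕ))] at htr; linarith [htr]
  have htπ : t < π := by nlinarith
  set ψ : Fin n → ℝ := fun k => π - Θ k with hψ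
  have hψpos : ∀ k, 0 < ψ k := fun k => by simp [hψ]; exact (hΘ k).2
  have hψsum : ∑ k, ψ k = π - r * t := by
    simp only [hψ, Finset.sum_sub_distrib, hsum, Finset.sum_const, Finset.card_univ,
      Fintype.card_fin, nsmul_eq_mul]
    ring
  have hψt : (∑ k, ψ k) + t ≤ π := by rw [hψsum]; nlinarith
  have hflip : ∀ k, sin (2 * Θ k - t) = -sin (2 * ψ k + t) := by
    intro k
    rw [show 2 * Θ k - t = 2*π - (2 * ψ k + t) by simp [hψ]; ring, sin_sub]
    simp
  have hflipsum : ∑ k, sin (2 * Θ k - t) = -∑ k, sin (2 * ψ k + t) := by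
    rw [← Finset.sum_neg_distrib]; exact Finset.sum_congr rfl fun k _ => hflip k
  have hm : ((2*r-1 : ℕ):ℝ) = 2*(r:ℝ) - 1 := by
    rw [Nat.cast_sub (by omega)]; push_cast; ring
  have hsin2S : sin (2*(∑ k, ψ k)+t) = -sin ((2*r-1 : ℕ) * t) := by
    rw [hψsum, show 2*(π - r*t)+t = 2*π - ((2*(r:ℝ)-1) * t) by ring, sin_sub, hm]
    simp
  rcases hbig with hr2 | hn3
  · -- r ≥ 2 : nonstrict lemA + strict B
    have hA := lemA n ψ t ht hψpos hψt
    have hB := sin_nat_mul_lt (2*r-1) (by omega) t ht htπ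
    rw [hm] at hB
    rw [hsin2S, hm] at hA
    rw [hflipsum]
    linarith
  · -- n ≥ 3 : strict lemA3 + nonstrict B
    have hA := lemA3 n hn3 ψ t ht hψpos hψt
    have hB := abs_sin_nat_mul t (sin_nonneg_of_nonneg_of_le_pi ht.le htπ.le) (2*r-1)
    rw [hm] at hB
    have hB' : sin ((2*(r:ℝ)-1) * t) ≤ (2*(r:ℝ)-1) * sin t := by linarith [le_of_abs_le hB]
    rw [hsin2S, hm] at hA
    rw [hflipsum]
    linarith

/-- A negative derivative gives a smaller value somewhere just to the right. -/
private lemma exists_right_lt {g : ℝ → ℝ} {s c d : ℝ} (h : HasDerivAt g d s) (hd : d < 0)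
    (hsc : s < c) : ∃ x ∈ Ioc s c, g x < g s := by
  have hs := hasDerivAt_iff_tendsto_slope.1 h
  have hev : ∀ᶠ z in nhdsWithin s {s}ᶜ, slope g s z < 0 := hs.eventually_lt_const hd
  have hmono : nhdsWithin s (Ioi s) ≤ nhdsWithin s {s}ᶜ :=
    nhdsWithin_mono s (fun z hz => ne_of_gt hz)
  have hIoc : Ioc s c ∈ nhdsWithin s (Ioi s) :=
    Ioc_mem_nhdsGT_of_mem ⟨le_refl s, hsc⟩
  have : ∀ᶠ z in nhdsWithin s (Ioi s), slope g s z < 0 ∧ z ∈ Ioc s c :=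
    (hev.filter_mono hmono).and (Filter.eventually_of_mem hIoc fun z hz => hz)
  obtain ⟨z, hz1, hz2⟩ := this.exists
  refine ⟨z, hz2, ?_⟩
  have hzs : 0 < z - s := by have := hz2.1; linarith
  rw [slope_def_field] at hz1
  have := (div_neg_iff).1 hz1
  rcases this with ⟨h1, h2⟩ | ⟨h1, h2⟩
  · linarith
  · linarith

/-- A negative derivative gives a larger value somewhere just to the left. -/
private lemma exists_left_gt {g : ℝ → ℝ} {s a d : ℝ} (h : HasDerivAt g d s) (hd : d < 0)
    (has : a < s) : ∃ x ∈ Ioo a s, g s < g x := by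
  have hs := hasDerivAt_iff_tendsto_slope.1 h
  have hev : ∀ᶠ z in nhdsWithin s {s}ᶜ, slope g s z < 0 := hs.eventually_lt_const hd
  have hmono : nhdsWithin s (Iio s) ≤ nhdsWithin s {s}ᶜ :=
    nhdsWithin_mono s (fun z hz => ne_of_lt hz)
  have hIoo : Ioo a s ∈ nhdsWithin s (Iio s) :=
    Ioo_mem_nhdsLT_of_mem ⟨has, le_refl s⟩
  have : ∀ᶠ z in nhdsWithin s (Iio s), slope g s z < 0 ∧ z ∈ Ioo a s :=
    (hev.filter_mono hmono).and (Filter.eventually_of_mem hIoo fun z hz => hz)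
  obtain ⟨z, hz1, hz2⟩ := this.exists
  refine ⟨z, hz2, ?_⟩
  have hzs : z - s < 0 := by have := hz2.2; linarith
  rw [slope_def_field] at hz1
  have := (div_neg_iff).1 hz1
  rcases this with ⟨h1, h2⟩ | ⟨h1, h2⟩
  · linarith
  · linarith

/-- Level-crossing: if `g a = L` and the derivative of `g` is negative at every point of
`[a,b]` where `g = L`, then `g < L` on `(a,b]`. -/
private lemma level_crossing {g gd : ℝ → ℝ} {a b L : ℝ} (hab : a < b)
    (hderiv : ∀ t ∈ Icc a b, HasDerivAt g (gd t) t)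
    (ha : g a = L) (hneg : ∀ t ∈ Icc a b, g t = L → gd t < 0) :
    ∀ t ∈ Ioc a b, g t < L := by
  have hcont : ContinuousOn g (Icc a b) :=
    fun t ht => (hderiv t ht).continuousAt.continuousWithinAt
  -- first, any point with g ≥ L in (a,b] gives a point with g > L in (a,b]
  by_contra hcon
  push_neg at hcon
  obtain ⟨t, ht, htL⟩ := hcon
  have hstep : ∃ c ∈ Ioc a b, L < g c := by
    rcases lt_or_eq_of_le htL with hlt | heq
    · exact ⟨t, ht, hlt⟩
    · have hd := hneg t ⟨ht.1.le, ht.2⟩ heq.symm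
      obtain ⟨x, hx, hgx⟩ := exists_left_gt (hderiv t ⟨ht.1.le, ht.2⟩) hd ht.1
      exact ⟨x, ⟨hx.1, hx.2.le.trans ht.2⟩, by rw [← heq] at hgx; exact hgx⟩
  obtain ⟨c, hc, hgc⟩ := hstep
  set U : Set ℝ := {z ∈ Icc a c | g z = L} with hU
  have hUne : U.Nonempty := ⟨a, ⟨le_refl a, hc.1.le⟩, ha⟩
  have hUbdd : BddAbove U := BddAbove.mono (fun z hz => hz.1) bddAbove_Icc
  have hsubIcc : Icc a c ⊆ Icc a b := Icc_subset_Icc (le_refl a) hc.2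
  have hUclosed : IsClosed U := by
    have := (hcont.mono hsubIcc).preimage_isClosed_of_isClosed isClosed_Icc
      (isClosed_singleton (x := L))
    exact this
  set s := sSup U with hs
  have hsU : s ∈ U := hUclosed.csSup_mem hUne hUbdd
  have hsIcc : s ∈ Icc a c := hsU.1
  have hgs : g s = L := hsU.2
  have hsc : s < c := by
    rcases lt_or_eq_of_le hsIcc.2 with h | h
    · exact h
    · exfalso; rw [h] at hgs; linarith
  have hgt : ∀ z ∈ Ioc s c, L < g z := by
    intro z hz
    rcases lt_trichotomy (g z) L with h | h | h
    · exfalso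
      have hzc : z < c := by
        rcases lt_or_eq_of_le hz.2 with h' | h'
        · exact h'
        · exfalso; rw [h'] at h; linarith
      have hcont' : ContinuousOn g (Icc z c) := hcont.mono (Icc_subset_Icc
        (le_trans hsIcc.1 hz.1.le) hc.2)
      have : L ∈ Ioo (g z) (g c) := ⟨h, hgc⟩
      obtain ⟨w, hw, hgw⟩ := intermediate_value_Ioo hzc.le hcont' this
      have hwU : w ∈ U := ⟨⟨le_trans (le_trans hsIcc.1 hz.1.le) hw.1.le, hw.2.le⟩, hgw⟩
      have := le_csSup hUbdd hwU
      have : s < w := lt_trans hz.1 hw.1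
      linarith [le_csSup hUbdd hwU]
    · exfalso
      have hzU : z ∈ U := ⟨⟨le_trans hsIcc.1 hz.1.le, hz.2⟩, h⟩
      linarith [le_csSup hUbdd hzU, hz.1]
    · exact h
  have hsb : s ∈ Icc a b := ⟨hsIcc.1, le_trans hsIcc.2 hc.2⟩
  have hd := hneg s hsb hgs
  obtain ⟨x, hx, hgx⟩ := exists_right_lt (hderiv s hsb) hd hsc
  have := hgt x hx
  rw [hgs] at hgx
  linarith

private lemma term_eq (τ c t : ℝ) (hτ : 0 < τ) (hst : 0 < sin t) :
    -((c * cos t - τ) / (τ * sin t^2) / (1 + ((τ * cos t - c) / (τ * sin t))^2))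
    = sin (π/2 - arctan ((τ * cos t - c) / (τ * sin t)))
      * cos (π/2 - arctan ((τ * cos t - c) / (τ * sin t)) - t) / sin t := by
  set u := (τ * cos t - c) / (τ * sin t) with hu
  have hpos : (0:ℝ) < 1 + u^2 := by positivity
  have h1 : (0:ℝ) < Real.sqrt (1 + u^2) := Real.sqrt_pos.2 hpos
  have h2 : Real.sqrt (1+u^2) * Real.sqrt (1+u^2) = 1 + u^2 := Real.mul_self_sqrt hpos.le
  have e1 : sin (π/2 - arctan u) = 1/Real.sqrt (1+u^2) := by
    rw [sin_pi_div_two_sub, cos_arctan]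
  have e2 : cos (π/2 - arctan u - t) = (u * cos t + sin t)/Real.sqrt (1+u^2) := by
    rw [show π/2 - arctan u - t = π/2 - (arctan u + t) by ring, cos_pi_div_two_sub,
      sin_add, sin_arctan, cos_arctan]
    field_simp
  rw [e1, e2]
  have stepB : 1/Real.sqrt (1+u^2) * ((u * cos t + sin t)/Real.sqrt (1+u^2)) / sin t
      = (u * cos t + sin t)/((1+u^2) * sin t) := by
    rw [div_mul_div_comm, one_mul, h2, div_div]
  rw [stepB]
  have hA2 : (u * cos t + sin t) * (τ * sin t) = τ - c * cos t := by
    rw [hu]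
    field_simp
    linear_combination τ * sin_sq_add_cos_sq t
  have stepA : -((c * cos t - τ) / (τ * sin t^2) / (1 + u^2))
      = (u * cos t + sin t)/((1+u^2) * sin t) := by
    rw [show u * cos t + sin t = (τ - c * cos t)/(τ * sin t) from by
      rw [eq_div_iff (mul_ne_zero hτ.ne' hst.ne')]; linear_combination hA2]
    field_simp
    ring_nf
  exact stepA

private lemma gd_neg (n r : ℕ) (hn : 1 ≤ n) (hr : 1 ≤ r) (hbig : 2 ≤ r ∨ 3 ≤ n)
    (τ : ℝ) (hτ : 0 < τ) (τv : Fin n → ℝ) (t : ℝ) (ht : 0 < t) (htr : t < π / r)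
    (hlevel : ∑ k, (π/2 - arctan ((τ * cos t - τv k) / (τ * sin t)))
      = r * t + ((n:ℝ)-1)*π) :
    (∑ k, -((τv k * cos t - τ) / (τ * sin t^2)
        / (1 + ((τ * cos t - τv k) / (τ * sin t))^2))) - (r:ℝ) < 0 := by
  have hrR : (1:ℝ) ≤ r := by exact_mod_cast hr
  have hπr : π / r ≤ π := by
    rw [div_le_iff₀ (by positivity : (0:ℝ) < (r:ℕ))]
    nlinarith [pi_pos]
  have htπ : t < π := lt_of_lt_of_le htr hπr
  have hst : 0 < sin t := sin_pos_of_pos_of_lt_pi ht htπ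
  set Θ : Fin n → ℝ := fun k => π/2 - arctan ((τ * cos t - τv k) / (τ * sin t)) with hΘdef
  have hΘb : ∀ k, 0 < Θ k ∧ Θ k < π := by
    intro k
    constructor
    · have := arctan_lt_pi_div_two ((τ * cos t - τv k) / (τ * sin t))
      simp only [hΘdef]; linarith
    · have := neg_pi_div_two_lt_arctan ((τ * cos t - τv k) / (τ * sin t))
      simp only [hΘdef]; linarith [pi_pos]
  have hterm : ∀ k, -((τv k * cos t - τ) / (τ * sin t^2)
      / (1 + ((τ * cos t - τv k) / (τ * sin t))^2))
      = sin (Θ k) * cos (Θ k - t) / sin t := fun k => term_eq τ (τv k) t hτ hst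
  have hkey := key_ineq n r hn hr hbig t ht htr Θ hΘb hlevel
  have hhalf : ∀ k, 2 * (sin (Θ k) * cos (Θ k - t)) = sin (2 * Θ k - t) + sin t := by
    intro k
    have := two_sin_mul_cos (Θ k) (Θ k - t)
    have e1 : sin (Θ k + (Θ k - t)) = sin (2 * Θ k - t) := by ring_nf
    have e2 : sin (Θ k - (Θ k - t)) = sin t := by ring_nf
    rw [e1, e2] at this
    linarith [this]
  have hsum2 : 2 * ∑ k, sin (Θ k) * cos (Θ k - t)
      = ∑ k, sin (2 * Θ k - t) + n * sin t := by
    rw [Finset.mul_sum]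
    rw [Finset.sum_congr rfl fun k _ => hhalf k]
    rw [Finset.sum_add_distrib]
    simp [Finset.card_univ]
  have hlt : ∑ k, sin (Θ k) * cos (Θ k - t) < r * sin t := by nlinarith
  calc (∑ k, -((τv k * cos t - τ) / (τ * sin t^2)
        / (1 + ((τ * cos t - τv k) / (τ * sin t))^2))) - (r:ℝ)
      = (∑ k, sin (Θ k) * cos (Θ k - t) / sin t) - r := by
        rw [Finset.sum_congr rfl fun k _ => hterm k]
    _ = (∑ k, sin (Θ k) * cos (Θ k - t)) / sin t - r := by rw [Finset.sum_div]
    _ < 0 := by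
        rw [sub_neg, div_lt_iff₀ hst]
        linarith

private lemma hasDerivAt_A (τ c θ : ℝ) (hτ : 0 < τ) (hs : sin θ ≠ 0) :
    HasDerivAt (fun x => π/2 - arctan ((τ * cos x - c) / (τ * sin x)))
      (-((c * cos θ - τ) / (τ * sin θ^2)
        / (1 + ((τ * cos θ - c) / (τ * sin θ))^2))) θ := by
  have hnum : HasDerivAt (fun x => τ * cos x - c) (τ * -sin θ) θ :=
    ((Real.hasDerivAt_cos θ).const_mul τ).sub_const c
  have hden : HasDerivAt (fun x => τ * sin x) (τ * cos θ) θ :=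
    (Real.hasDerivAt_sin θ).const_mul τ
  have hdne : τ * sin θ ≠ 0 := mul_ne_zero hτ.ne' hs
  have hu := hnum.div hden hdne
  have harc := hu.arctan
  have hfin := harc.const_sub (π/2)
  refine hfin.congr_deriv ?_
  simp only [Pi.div_apply]
  have hnumeq : τ * -sin θ * (τ * sin θ) - (τ * cos θ - c) * (τ * cos θ)
      = τ * (c * cos θ - τ) := by
    linear_combination (-(τ:ℝ)^2) * sin_sq_add_cos_sq θ
  rw [hnumeq]
  have hpos : (0:ℝ) < 1 + ((τ * cos θ - c) / (τ * sin θ))^2 := by positivity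
  field_simp

private lemma theta_eq {τ c θ Θ : ℝ} (hτ : 0 < τ) (hθ : 0 < θ) (hΘ1 : θ < Θ) (hΘ2 : Θ < π)
    (hrel : τ * sin (Θ - θ) = c * sin Θ) :
    Θ = π/2 - arctan ((τ * cos θ - c) / (τ * sin θ)) := by
  have hθπ : θ < π := lt_trans hΘ1 hΘ2
  have hsθ : 0 < sin θ := sin_pos_of_pos_of_lt_pi hθ hθπ
  have hsΘ : 0 < sin Θ := sin_pos_of_pos_of_lt_pi (lt_trans hθ hΘ1) hΘ2
  have hcot : (τ * cos θ - c) / (τ * sin θ) = cos Θ / sin Θ := by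
    rw [div_eq_div_iff (mul_ne_zero hτ.ne' hsθ.ne') hsΘ.ne']
    rw [sin_sub] at hrel
    linear_combination hrel
  have htan : cos Θ / sin Θ = tan (π/2 - Θ) := by
    rw [Real.tan_pi_div_two_sub, tan_eq_sin_div_cos, inv_div]
  have : arctan ((τ * cos θ - c) / (τ * sin θ)) = π/2 - Θ := by
    rw [hcot, htan, Real.arctan_tan (by linarith) (by linarith)]
  rw [this]; ring

private lemma A_mono {c θ τ₁ τ₂ : ℝ} (hc : 0 < c) (hτ1 : 0 < τ₁) (hτ12 : τ₁ ≤ τ₂)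
    (hsθ : 0 < sin θ) :
    π/2 - arctan ((τ₂ * cos θ - c) / (τ₂ * sin θ))
      ≤ π/2 - arctan ((τ₁ * cos θ - c) / (τ₁ * sin θ)) := by
  have hτ2 : 0 < τ₂ := lt_of_lt_of_le hτ1 hτ12
  have hu : (τ₁ * cos θ - c) / (τ₁ * sin θ) ≤ (τ₂ * cos θ - c) / (τ₂ * sin θ) := by
    rw [div_le_div_iff₀ (by positivity) (by positivity)]
    nlinarith [mul_nonneg (mul_nonneg hc.le hsθ.le) (sub_nonneg.2 hτ12)]
  have := Real.arctan_strictMono.monotone hu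
  linarith

/-- If `(n, r) ≠ (2, 1)`, the function `θ ↦ τ(θ)` (with `l = n - 1`) is
strictly monotone decreasing on `(0, π/r)`. -/
theorem tau_strict_anti
    (n r : ℕ) (hn : 0 < n) (hr : 0 < r) (hmax : 1 < max n r)
    (hne : ¬(n = 2 ∧ r = 1))
    (P : Polynomial ℝ) (c : ℝ) (hc : c ≠ 0)
    (τv : Fin n → ℝ) (hτmono : Monotone τv) (hτpos : ∀ k, 0 < τv k)
    (hP : P = Polynomial.C c * ∏ k, (Polynomial.X - Polynomial.C (τv k)))
    (hP0 : 0 < P.eval 0)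
    (Θf : ℝ → Fin n → ℝ)
    (hΘf : ∀ θ ∈ Set.Ioo (0 : ℝ) (Real.pi / r), IsAdmissible n τv r θ (n - 1) (Θf θ))
    (τf : ℝ → ℝ)
    (hτf : ∀ θ ∈ Set.Ioo (0 : ℝ) (Real.pi / r), ∀ k,
      τv k * Real.sin (Θf θ k) / Real.sin (Θf θ k - θ) = τf θ) :
    StrictAntiOn τf (Set.Ioo (0 : ℝ) (Real.pi / r)) := by
  have hbig : 2 ≤ r ∨ 3 ≤ n := by
    rcases Nat.lt_or_ge r 2 with h | h
    · right
      have hr1 : r = 1 := by omega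
      subst hr1
      simp at hmax hne
      omega
    · left; exact h
  have hπr : π / r ≤ π := by
    rw [div_le_iff₀ (by positivity : (0:ℝ) < (r:ℕ))]
    have : (1:ℝ) ≤ r := by exact_mod_cast hr
    nlinarith [pi_pos]
  -- positivity of τf on the interval
  have hτfpos : ∀ θ ∈ Set.Ioo (0:ℝ) (π / r), 0 < τf θ := by
    intro θ hθ
    obtain ⟨hθ0, hθr⟩ := hθ
    have hθπ : θ < π := lt_of_lt_of_le hθr hπr
    obtain ⟨hb, _, _⟩ := hΘf θ ⟨hθ0, hθr⟩
    have hk := hτf θ ⟨hθ0, hθr⟩ ⟨0, hn⟩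
    obtain ⟨h1, h2⟩ := hb ⟨0, hn⟩
    have hsΘ : 0 < sin (Θf θ ⟨0, hn⟩) := sin_pos_of_pos_of_lt_pi (lt_trans hθ0 h1) h2
    have hsd : 0 < sin (Θf θ ⟨0, hn⟩ - θ) :=
      sin_pos_of_pos_of_lt_pi (by linarith) (by linarith)
    rw [← hk]
    exact div_pos (mul_pos (hτpos _) hsΘ) hsd
  -- the representation of the admissible angles via arctan
  have hrep : ∀ θ ∈ Set.Ioo (0:ℝ) (π / r), ∀ k, Θf θ k
      = π/2 - arctan ((τf θ * cos θ - τv k) / (τf θ * sin θ)) := by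
    intro θ hθ k
    obtain ⟨hθ0, hθr⟩ := hθ
    obtain ⟨hb, _, _⟩ := hΘf θ ⟨hθ0, hθr⟩
    obtain ⟨h1, h2⟩ := hb k
    have hτθ := hτfpos θ ⟨hθ0, hθr⟩
    have hsd : 0 < sin (Θf θ k - θ) := sin_pos_of_pos_of_lt_pi (by linarith) (by linarith)
    have hk := hτf θ ⟨hθ0, hθr⟩ k
    have hrel : τf θ * sin (Θf θ k - θ) = τv k * sin (Θf θ k) := by
      rw [← hk]; field_simp
    exact theta_eq hτθ hθ0 h1 h2 hrel
  intro x hx y hy hxy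
  obtain ⟨hx0, hxr⟩ := hx
  obtain ⟨hy0, hyr⟩ := hy
  have hτ1 : 0 < τf x := hτfpos x ⟨hx0, hxr⟩
  have hτ2 : 0 < τf y := hτfpos y ⟨hy0, hyr⟩
  set τ₁ := τf x with hτ₁def
  -- the comparison function
  set g : ℝ → ℝ := fun θ =>
    (∑ k, (π/2 - arctan ((τ₁ * cos θ - τv k) / (τ₁ * sin θ)))) - r*θ with hgdef
  set gd : ℝ → ℝ := fun θ =>
    (∑ k, -((τv k * cos θ - τ₁) / (τ₁ * sin θ^2)
      / (1 + ((τ₁ * cos θ - τv k) / (τ₁ * sin θ))^2))) - (r:ℝ) with hgddef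
  have hderiv : ∀ t ∈ Set.Icc x y, HasDerivAt g (gd t) t := by
    intro t ht
    have ht0 : 0 < t := lt_of_lt_of_le hx0 ht.1
    have htπ : t < π := lt_of_le_of_lt ht.2 (lt_of_lt_of_le hyr hπr)
    have hst : sin t ≠ 0 := (sin_pos_of_pos_of_lt_pi ht0 htπ).ne'
    have hsumd : HasDerivAt (fun θ => ∑ k, (π/2 - arctan ((τ₁ * cos θ - τv k) / (τ₁ * sin θ))))
        (∑ k, -((τv k * cos t - τ₁) / (τ₁ * sin t^2)
          / (1 + ((τ₁ * cos t - τv k) / (τ₁ * sin t))^2))) t :=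
      HasDerivAt.fun_sum (fun k _ => hasDerivAt_A τ₁ (τv k) t hτ1 hst)
    have hlin : HasDerivAt (fun θ : ℝ => (r:ℝ) * θ) (r:ℝ) t := by
      simpa using (hasDerivAt_id t).const_mul (r:ℝ)
    exact hsumd.sub hlin
  have hcast : ((n - 1 : ℕ) : ℝ) = (n:ℝ) - 1 := by
    rw [Nat.cast_sub hn]; simp
  set L : ℝ := ((n:ℝ) - 1) * π with hLdef
  have hga : g x = L := by
    obtain ⟨_, hsum, _⟩ := hΘf x ⟨hx0, hxr⟩
    have : ∑ k, (π/2 - arctan ((τ₁ * cos x - τv k) / (τ₁ * sin x))) = ∑ k, Θf x k :=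
      (Finset.sum_congr rfl fun k _ => (hrep x ⟨hx0, hxr⟩ k).symm)
    rw [hgdef]
    simp only [this, hsum, hcast]
    ring
  have hneg : ∀ t ∈ Set.Icc x y, g t = L → gd t < 0 := by
    intro t ht hlev
    have ht0 : 0 < t := lt_of_lt_of_le hx0 ht.1
    have htr : t < π / r := lt_of_le_of_lt ht.2 hyr
    apply gd_neg n r hn hr hbig τ₁ hτ1 τv t ht0 htr
    rw [hgdef] at hlev
    have := hlev
    linarith [hlev, this]
  have hgy : g y < L := level_crossing hxy hderiv hga hneg y ⟨hxy, le_refl y⟩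
  -- conclude
  by_contra hcon
  push_neg at hcon
  have hsy : 0 < sin y := sin_pos_of_pos_of_lt_pi hy0 (lt_of_lt_of_le hyr hπr)
  have hmono : ∀ k, π/2 - arctan ((τf y * cos y - τv k) / (τf y * sin y))
      ≤ π/2 - arctan ((τ₁ * cos y - τv k) / (τ₁ * sin y)) :=
    fun k => A_mono (hτpos k) hτ1 hcon hsy
  have hsum2 : ∑ k, Θf y k ≤ ∑ k, (π/2 - arctan ((τ₁ * cos y - τv k) / (τ₁ * sin y))) := by
    apply Finset.sum_le_sum
    intro k _
    rw [hrep y ⟨hy0, hyr⟩ k]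
    exact hmono k
  obtain ⟨_, hsumy, _⟩ := hΘf y ⟨hy0, hyr⟩
  rw [hsumy, hcast] at hsum2
  rw [hgdef] at hgy
  simp only at hgy
  linarith
end

section
/- Let n and r be positive integers with max{n, r} > 1 and (n, r) ≠ (2, 1), let θ ∈ (0, π/r), and let (θ_1, …, θ_n) be an admissible tuple for (θ, n − 1). Then r − Σ_{k=1}^n (sin θ_k / sin θ) · cos(θ_k − θ) > 0. -/
/-- Spreading lemma (weak): replacing the pair `(a,b)` by the more spread pair
`(t, a+b-t)` with the same sum weakly decreases the sum of sines, provided `a+b ≤ 2π`. -/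
lemma spread_le {t a b : ℝ} (ht : 0 ≤ t) (hta : t ≤ a) (htb : t ≤ b)
    (hab : a + b ≤ 2 * Real.pi) :
    Real.sin t + Real.sin (a + b - t) ≤ Real.sin a + Real.sin b := by
  set s := (a + b) / 2 with hs
  have hs0 : 0 ≤ s := by simp only [hs]; linarith
  have hsπ : s ≤ Real.pi := by simp only [hs]; linarith
  have hsin : 0 ≤ Real.sin s := Real.sin_nonneg_of_nonneg_of_le_pi hs0 hsπ
  have e1 : Real.sin a + Real.sin b = 2 * Real.sin s * Real.cos ((a - b)/2) := by
    have h1 : Real.sin (s + (a-b)/2) = Real.sin s * Real.cos ((a-b)/2)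
        + Real.cos s * Real.sin ((a-b)/2) := Real.sin_add _ _
    have h2 : Real.sin (s - (a-b)/2) = Real.sin s * Real.cos ((a-b)/2)
        - Real.cos s * Real.sin ((a-b)/2) := Real.sin_sub _ _
    have ea : s + (a-b)/2 = a := by simp only [hs]; ring
    have eb : s - (a-b)/2 = b := by simp only [hs]; ring
    rw [ea] at h1; rw [eb] at h2; linarith
  have e2 : Real.sin t + Real.sin (a + b - t) = 2 * Real.sin s * Real.cos (s - t) := by
    have h1 : Real.sin (s + (s - t)) = Real.sin s * Real.cos (s - t)
        + Real.cos s * Real.sin (s - t) := Real.sin_add _ _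
    have h2 : Real.sin (s - (s - t)) = Real.sin s * Real.cos (s - t)
        - Real.cos s * Real.sin (s - t) := Real.sin_sub _ _
    have ea : s + (s - t) = a + b - t := by simp only [hs]; ring
    have eb : s - (s - t) = t := by ring
    rw [ea] at h1; rw [eb] at h2; linarith
  have habs : |(a - b)/2| ≤ s - t := by
    rw [abs_le]
    constructor <;> (simp only [hs]) <;> linarith
  have hcos : Real.cos (s - t) ≤ Real.cos ((a - b)/2) := by
    rw [← Real.cos_abs ((a-b)/2)]
    exact Real.cos_le_cos_of_nonneg_of_le_pi (abs_nonneg _) (by linarith) habs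
  have := mul_le_mul_of_nonneg_left hcos (by linarith : (0:ℝ) ≤ 2 * Real.sin s)
  linarith

/-- Spreading lemma (strict version). -/
lemma spread_lt {t a b : ℝ} (ht : 0 ≤ t) (hta : t < a) (htb : t < b)
    (hab : a + b < 2 * Real.pi) :
    Real.sin t + Real.sin (a + b - t) < Real.sin a + Real.sin b := by
  set s := (a + b) / 2 with hs
  have hs0 : 0 < s := by simp only [hs]; linarith
  have hsπ : s < Real.pi := by simp only [hs]; linarith
  have hsin : 0 < Real.sin s := Real.sin_pos_of_pos_of_lt_pi hs0 hsπ
  have e1 : Real.sin a + Real.sin b = 2 * Real.sin s * Real.cos ((a - b)/2) := by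
    have h1 : Real.sin (s + (a-b)/2) = Real.sin s * Real.cos ((a-b)/2)
        + Real.cos s * Real.sin ((a-b)/2) := Real.sin_add _ _
    have h2 : Real.sin (s - (a-b)/2) = Real.sin s * Real.cos ((a-b)/2)
        - Real.cos s * Real.sin ((a-b)/2) := Real.sin_sub _ _
    have ea : s + (a-b)/2 = a := by simp only [hs]; ring
    have eb : s - (a-b)/2 = b := by simp only [hs]; ring
    rw [ea] at h1; rw [eb] at h2; linarith
  have e2 : Real.sin t + Real.sin (a + b - t) = 2 * Real.sin s * Real.cos (s - t) := by
    have h1 : Real.sin (s + (s - t)) = Real.sin s * Real.cos (s - t)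
        + Real.cos s * Real.sin (s - t) := Real.sin_add _ _
    have h2 : Real.sin (s - (s - t)) = Real.sin s * Real.cos (s - t)
        - Real.cos s * Real.sin (s - t) := Real.sin_sub _ _
    have ea : s + (s - t) = a + b - t := by simp only [hs]; ring
    have eb : s - (s - t) = t := by ring
    rw [ea] at h1; rw [eb] at h2; linarith
  have habs : |(a - b)/2| < s - t := by
    rw [abs_lt]
    constructor <;> (simp only [hs]) <;> linarith
  have hcos : Real.cos (s - t) < Real.cos ((a - b)/2) := by
    rw [← Real.cos_abs ((a-b)/2)]
    exact Real.cos_lt_cos_of_nonneg_of_le_pi (abs_nonneg _) (by linarith) habs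
  have := mul_lt_mul_of_pos_left hcos (by linarith : (0:ℝ) < 2 * Real.sin s)
  linarith

lemma sum_ge_len_mul {t : ℝ} : ∀ l : List ℝ, (∀ y ∈ l, t ≤ y) →
    (l.length : ℝ) * t ≤ l.sum := by
  intro l hl
  induction l with
  | nil => simp
  | cons a l ih =>
    have h1 := ih (fun y hy => hl y (List.mem_cons_of_mem a hy))
    have h2 := hl a (List.mem_cons_self)
    simp only [List.length_cons, List.sum_cons]
    push_cast
    linarith

/-- Main list lemma: for a list of reals all `≥ t ≥ 0` headed by `a ≥ t`, if the total sum
minus `(length) * t` is at most `2π - t`, then the sum of sines is at least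
`(length) * sin t + sin (total - length * t)`. -/
lemma list_sin_ge {t : ℝ} (ht0 : 0 ≤ t) :
    ∀ (l : List ℝ) (a : ℝ), t ≤ a → (∀ y ∈ l, t ≤ y) →
      a + l.sum - (l.length : ℝ) * t ≤ 2 * Real.pi - t →
      (l.length : ℝ) * Real.sin t + Real.sin (a + l.sum - (l.length : ℝ) * t)
        ≤ Real.sin a + (l.map Real.sin).sum := by
  intro l
  induction l with
  | nil => intro a hta _ _; simp
  | cons b l ih =>
    intro a hta hmem hsum
    have htb : t ≤ b := hmem b (List.mem_cons_self)
    have hmem' : ∀ y ∈ l, t ≤ y := fun y hy => hmem y (List.mem_cons_of_mem b hy)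
    have hlsum : (l.length : ℝ) * t ≤ l.sum := sum_ge_len_mul l hmem'
    have hsum' : (a + b - t) + l.sum - (l.length : ℝ) * t ≤ 2 * Real.pi - t := by
      simp only [List.sum_cons, List.length_cons] at hsum
      push_cast at hsum
      linarith
    have ihh := ih (a + b - t) (by linarith) hmem' hsum'
    have hab : a + b ≤ 2 * Real.pi := by
      simp only [List.sum_cons, List.length_cons] at hsum
      push_cast at hsum
      linarith
    have hspread := spread_le ht0 hta htb hab
    have e : a + (b :: l).sum - ((b :: l).length : ℝ) * t
        = (a + b - t) + l.sum - (l.length : ℝ) * t := by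
      simp only [List.sum_cons, List.length_cons]
      push_cast
      ring
    rw [e, List.map_cons, List.sum_cons, List.length_cons]
    push_cast
    linarith

lemma abs_sin_nat_mul_le {θ : ℝ} (h : 0 ≤ Real.sin θ) :
    ∀ m : ℕ, |Real.sin (m * θ)| ≤ m * Real.sin θ := by
  intro m
  induction m with
  | zero => simp
  | succ m ih =>
    have e : ((m + 1 : ℕ) : ℝ) * θ = m * θ + θ := by push_cast; ring
    rw [e, Real.sin_add]
    have h1 : |Real.sin (m*θ) * Real.cos θ + Real.cos (m*θ) * Real.sin θ|
        ≤ |Real.sin (m*θ) * Real.cos θ| + |Real.cos (m*θ) * Real.sin θ| := abs_add_le _ _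
    rw [abs_mul, abs_mul] at h1
    have h2 : |Real.sin (m*θ)| * |Real.cos θ| ≤ |Real.sin (m*θ)| * 1 :=
      mul_le_mul_of_nonneg_left (Real.abs_cos_le_one θ) (abs_nonneg _)
    have h3 : |Real.cos (m*θ)| * |Real.sin θ| ≤ 1 * |Real.sin θ| :=
      mul_le_mul_of_nonneg_right (Real.abs_cos_le_one _) (abs_nonneg _)
    rw [abs_of_nonneg h] at h1 h3
    push_cast
    nlinarith

lemma abs_sin_nat_mul_lt {θ : ℝ} (h0 : 0 < θ) (hπ : θ < Real.pi) {m : ℕ} (hm : 2 ≤ m) :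
    |Real.sin (m * θ)| < m * Real.sin θ := by
  have hs : 0 < Real.sin θ := Real.sin_pos_of_pos_of_lt_pi h0 hπ
  have hc : |Real.cos θ| < 1 := by
    rw [← sq_lt_one_iff_abs_lt_one]
    nlinarith [Real.sin_sq_add_cos_sq θ]
  have h2θ : |Real.sin (2 * θ)| < 2 * Real.sin θ := by
    rw [Real.sin_two_mul, abs_mul, abs_mul]
    have : |(2:ℝ)| = 2 := by norm_num
    rw [this, abs_of_pos hs]
    nlinarith
  obtain ⟨k, rfl⟩ : ∃ k, m = k + 2 := ⟨m - 2, by omega⟩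
  have e : ((k + 2 : ℕ) : ℝ) * θ = k * θ + 2 * θ := by push_cast; ring
  rw [e, Real.sin_add]
  have h1 : |Real.sin (k*θ) * Real.cos (2*θ) + Real.cos (k*θ) * Real.sin (2*θ)|
      ≤ |Real.sin (k*θ)| * |Real.cos (2*θ)| + |Real.cos (k*θ)| * |Real.sin (2*θ)| := by
    calc _ ≤ |Real.sin (k*θ) * Real.cos (2*θ)| + |Real.cos (k*θ) * Real.sin (2*θ)| :=
          abs_add_le _ _
      _ = _ := by rw [abs_mul, abs_mul]
  have h2 : |Real.sin (k*θ)| * |Real.cos (2*θ)| ≤ |Real.sin (k*θ)| * 1 :=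
    mul_le_mul_of_nonneg_left (Real.abs_cos_le_one _) (abs_nonneg _)
  have h3 : |Real.cos (k*θ)| * |Real.sin (2*θ)| ≤ 1 * |Real.sin (2*θ)| :=
    mul_le_mul_of_nonneg_right (Real.abs_cos_le_one _) (abs_nonneg _)
  have ih := abs_sin_nat_mul_le hs.le k
  push_cast
  nlinarith

theorem A_theta_pos'
    (n r : ℕ) (hn : 0 < n) (hr : 0 < r) (hmax : 1 < max n r)
    (hne : ¬(n = 2 ∧ r = 1))
    (θ : ℝ) (hθ : θ ∈ Set.Ioo (0 : ℝ) (Real.pi / r))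
    (Θ : Fin n → ℝ)
    (hb : ∀ k, θ < Θ k ∧ Θ k < Real.pi)
    (hsum : ∑ k, Θ k = r * θ + (↑(n - 1) : ℝ) * Real.pi) :
    0 < (r : ℝ) - ∑ k, Real.sin (Θ k) / Real.sin θ * Real.cos (Θ k - θ) := by
  have hπ := Real.pi_pos
  have hθ0 : 0 < θ := hθ.1
  have hr1 : (1:ℝ) ≤ r := by exact_mod_cast hr
  have hθπ : θ < Real.pi := lt_of_lt_of_le hθ.2 (div_le_self hπ.le hr1)
  have hsθ : 0 < Real.sin θ := Real.sin_pos_of_pos_of_lt_pi hθ0 hθπ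
  have hrθ : (r:ℝ) * θ < Real.pi := by
    have := (lt_div_iff₀ (by positivity : (0:ℝ) < r)).mp hθ.2
    linarith
  set x : Fin n → ℝ := fun k => 2 * Real.pi + θ - 2 * Θ k with hx
  have hsum' : ∑ k, Θ k = r * θ + ((n:ℝ) - 1) * Real.pi := by
    rw [hsum, Nat.cast_sub hn, Nat.cast_one]
  have hxsum : ∑ k, x k = 2 * Real.pi + ((n:ℝ) - 2*r) * θ := by
    simp only [hx, Finset.sum_sub_distrib, Finset.sum_const, Finset.card_univ,
      Fintype.card_fin, nsmul_eq_mul, ← Finset.mul_sum, hsum']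
    ring
  have hxθ : ∀ k, θ < x k := by
    intro k
    have := (hb k).2
    simp only [hx]
    linarith
  -- key inequality
  have key : ((n:ℝ) - 2*r) * Real.sin θ < ∑ k, Real.sin (x k) := by
    set L := List.ofFn x with hL
    have hLlen : (L.length : ℝ) = n := by rw [hL, List.length_ofFn]
    have hLsum : L.sum = 2 * Real.pi + ((n:ℝ) - 2*r) * θ := by
      rw [hL, List.sum_ofFn, hxsum]
    have hLmem : ∀ y ∈ L, θ < y := by
      intro y hy
      rw [hL, List.mem_ofFn] at hy
      obtain ⟨k, rfl⟩ := hy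
      exact hxθ k
    have hLmap : (L.map Real.sin).sum = ∑ k, Real.sin (x k) := by
      rw [hL, List.map_ofFn, List.sum_ofFn]
      rfl
    have hLne : L ≠ [] := by
      rw [hL]
      intro h
      have := congrArg List.length h
      simp [List.length_ofFn] at this
      omega
    obtain ⟨a, l, hcons⟩ := List.exists_cons_of_ne_nil hLne
    have hLlenN : L.length = n := by rw [hL]; exact List.length_ofFn
    rw [hcons] at hLlen hLsum hLmem hLmap hLlenN
    have hta : θ < a := hLmem a (List.mem_cons_self)
    have hmem' : ∀ y ∈ l, θ < y := fun y hy => hLmem y (List.mem_cons_of_mem a hy)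
    have hlen : (l.length : ℝ) = (n:ℝ) - 1 := by
      simp only [List.length_cons] at hLlen
      push_cast at hLlen
      linarith
    have hlsum : a + l.sum = 2 * Real.pi + ((n:ℝ) - 2*r) * θ := by
      simpa using hLsum
    rw [← hLmap, List.map_cons, List.sum_cons]
    rcases Nat.lt_or_ge r 2 with hr2 | hr2
    · -- r = 1, hence n ≥ 3
      have hrr : r = 1 := by omega
      have hn3 : 3 ≤ n := by omega
      obtain ⟨b, l₂, rfl⟩ := List.exists_cons_of_ne_nil
        (show l ≠ [] by
          intro h; rw [h] at hLlenN; simp at hLlenN; omega)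
      obtain ⟨c, l₃, rfl⟩ := List.exists_cons_of_ne_nil
        (show l₂ ≠ [] by
          intro h; rw [h] at hLlenN; simp at hLlenN; omega)
      have htb : θ < b := hmem' b (List.mem_cons_self)
      have htc : θ < c := hmem' c (List.mem_cons_of_mem b (List.mem_cons_self))
      have hmem₂ : ∀ y ∈ (c :: l₃), θ ≤ y :=
        fun y hy => (hmem' y (List.mem_cons_of_mem b hy)).le
      have hl₃ : ∀ y ∈ l₃, θ ≤ y := fun y hy => hmem₂ y (List.mem_cons_of_mem c hy)
      have hlenN₂ : (c :: l₃).length + 2 = n := by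
        simp only [List.length_cons] at hLlenN ⊢
        omega
      have hlen₂ : ((c :: l₃).length : ℝ) = (n:ℝ) - 2 := by
        have h := congrArg (Nat.cast : ℕ → ℝ) hlenN₂
        push_cast at h
        linarith
      have hsum₂ : (c :: l₃).sum = 2 * Real.pi + ((n:ℝ) - 2*r) * θ - a - b := by
        simp only [List.sum_cons] at hlsum ⊢
        linarith
      have hl₂ge : ((c :: l₃).length : ℝ) * θ < (c :: l₃).sum := by
        have h₃ := sum_ge_len_mul l₃ hl₃
        simp only [List.length_cons, List.sum_cons]
        push_cast
        linarith
      have hab2π : a + b < 2 * Real.pi := by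
        rw [hlen₂, hsum₂] at hl₂ge
        have hrrc : ((n:ℝ) - 2*r) = (n:ℝ) - 2 := by rw [hrr]; norm_num
        rw [hrrc] at hl₂ge
        linarith
      have hspread := spread_lt hθ0.le hta htb hab2π
      -- weak lemma on (c :: l₃) with head (a + b - θ)
      have hhead : θ ≤ a + b - θ := by linarith
      have hcond : (a + b - θ) + (c :: l₃).sum - ((c :: l₃).length : ℝ) * θ
          ≤ 2 * Real.pi - θ := by
        rw [hlen₂, hsum₂, hrr]
        push_cast
        ring_nf
        linarith
      have hweak := list_sin_ge hθ0.le (c :: l₃) (a + b - θ) hhead hmem₂ hcond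
      have harg : (a + b - θ) + (c :: l₃).sum - ((c :: l₃).length : ℝ) * θ
          = 2 * Real.pi - θ := by
        rw [hlen₂, hsum₂, hrr]
        push_cast
        ring
      rw [harg] at hweak
      have hsin2π : Real.sin (2 * Real.pi - θ) = -Real.sin θ := by
        rw [show 2 * Real.pi - θ = -θ + 2 * Real.pi by ring, Real.sin_add_two_pi,
          Real.sin_neg]
      rw [hsin2π, hlen₂] at hweak
      have hrrr : ((n:ℝ) - 2*r) = (n:ℝ) - 2 := by rw [hrr]; norm_num
      rw [hrrr]
      simp only [List.map_cons, List.sum_cons] at hweak ⊢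
      linarith
    · -- r ≥ 2 case
      have hmemle : ∀ y ∈ l, θ ≤ y := fun y hy => (hmem' y hy).le
      have hcond : a + l.sum - (l.length : ℝ) * θ ≤ 2 * Real.pi - θ := by
        rw [hlen, hlsum]
        have : (2:ℝ) ≤ r := by exact_mod_cast hr2
        nlinarith
      have hweak := list_sin_ge hθ0.le l a hta.le hmemle hcond
      have harg : a + l.sum - (l.length : ℝ) * θ
          = 2 * Real.pi - (2*(r:ℝ) - 1) * θ := by
        rw [hlen, hlsum]; ring
      rw [harg] at hweak
      have hsin2π : Real.sin (2 * Real.pi - (2*(r:ℝ) - 1) * θ)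
          = -Real.sin ((2*(r:ℝ) - 1) * θ) := by
        rw [show 2 * Real.pi - (2*(r:ℝ) - 1) * θ = -((2*(r:ℝ) - 1) * θ) + 2 * Real.pi
          by ring, Real.sin_add_two_pi, Real.sin_neg]
      rw [hsin2π, hlen] at hweak
      have hcast : ((2*r - 1 : ℕ) : ℝ) = 2*(r:ℝ) - 1 := by
        push_cast [Nat.cast_sub (by omega : 1 ≤ 2*r)]
        ring
      have hstrict : Real.sin ((2*(r:ℝ) - 1) * θ) < (2*(r:ℝ) - 1) * Real.sin θ := by
        have h := abs_sin_nat_mul_lt hθ0 hθπ (m := 2*r - 1) (by omega)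
        rw [hcast] at h
        calc Real.sin ((2*(r:ℝ) - 1) * θ) ≤ |Real.sin ((2*(r:ℝ) - 1) * θ)| := le_abs_self _
          _ < _ := h
      linarith

  -- reduce the goal to `key`
  have hprod : ∀ k, 2 * (Real.sin (Θ k) * Real.cos (Θ k - θ))
      = -Real.sin (x k) + Real.sin θ := by
    intro k
    have A := Real.sin_add (Θ k) (Θ k - θ)
    have B := Real.sin_sub (Θ k) (Θ k - θ)
    have eB : Θ k - (Θ k - θ) = θ := by ring
    rw [eB] at B
    have eC : x k = -(Θ k + (Θ k - θ)) + 2 * Real.pi := by simp only [hx]; ring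
    have C : Real.sin (x k) = -Real.sin (Θ k + (Θ k - θ)) := by
      rw [eC, Real.sin_add_two_pi, Real.sin_neg]
    linarith
  have hsum2 : 2 * ∑ k, Real.sin (Θ k) * Real.cos (Θ k - θ)
      = -(∑ k, Real.sin (x k)) + (n:ℝ) * Real.sin θ := by
    rw [Finset.mul_sum]
    rw [Finset.sum_congr rfl (fun k _ => hprod k)]
    rw [Finset.sum_add_distrib, Finset.sum_neg_distrib, Finset.sum_const,
      Finset.card_univ, Fintype.card_fin, nsmul_eq_mul]
  have hdiv : (∑ k, Real.sin (Θ k) / Real.sin θ * Real.cos (Θ k - θ))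
      = (∑ k, Real.sin (Θ k) * Real.cos (Θ k - θ)) / Real.sin θ := by
    rw [Finset.sum_div]
    exact Finset.sum_congr rfl fun k _ => by ring
  rw [hdiv, sub_pos, div_lt_iff₀ hsθ]
  linarith

/-- If `max{n, r} > 1`, `(n, r) ≠ (2, 1)`, `θ ∈ (0, π/r)` and
`(θ_1, …, θ_n)` is an admissible tuple for `(θ, n - 1)`, then
`r - ∑_k (sin θ_k / sin θ) cos(θ_k - θ) > 0`. -/
theorem A_theta_pos
    (n r : ℕ) (hn : 0 < n) (hr : 0 < r) (hmax : 1 < max n r)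
    (hne : ¬(n = 2 ∧ r = 1))
    (P : Polynomial ℝ) (c : ℝ) (hc : c ≠ 0)
    (τv : Fin n → ℝ) (hτmono : Monotone τv) (hτpos : ∀ k, 0 < τv k)
    (hP : P = Polynomial.C c * ∏ k, (Polynomial.X - Polynomial.C (τv k)))
    (hP0 : 0 < P.eval 0)
    (θ : ℝ) (hθ : θ ∈ Set.Ioo (0 : ℝ) (Real.pi / r))
    (Θ : Fin n → ℝ) (hΘ : IsAdmissible n τv r θ (n - 1) Θ) :
    0 < (r : ℝ) - ∑ k, Real.sin (Θ k) / Real.sin θ * Real.cos (Θ k - θ) := by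
  obtain ⟨hb, hsum, -⟩ := hΘ
  exact A_theta_pos' n r hn hr hmax hne θ hθ Θ hb hsum
end

section
/- Let z ∈ ℝ, set d = max{n, r}, and suppose that the polynomial t ↦ P(t) + z t^r has degree exactly d with leading coefficient c, and that its d complex zeros t_0, t_1, …, t_{d−1} are pairwise distinct. Then for every m ≥ 0, H_m(z) = −(1/c) · Σ_{k=0}^{d−1} t_k^{−(m+1)} · Π_{j ≠ k} (t_k − t_j)^{−1}. -/
open Polynomial PowerSeries

/-- If the polynomial `t ↦ P(t) + z t^r` has degree exactly
`d = max{n, r}` with leading coefficient `c₀` and pairwise distinct complex zeros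
`t_0, …, t_{d-1}`, then `H_m(z) = -(1/c₀) ∑_k t_k^{-(m+1)} ∏_{j ≠ k} (t_k - t_j)⁻¹`. -/
theorem H_partial_fractions
    (n r : ℕ) (hn : 0 < n) (hr : 0 < r)
    (P : Polynomial ℝ) (c : ℝ) (hc : c ≠ 0)
    (τv : Fin n → ℝ) (hτmono : Monotone τv) (hτpos : ∀ k, 0 < τv k)
    (hP : P = Polynomial.C c * ∏ k, (Polynomial.X - Polynomial.C (τv k)))
    (hP0 : 0 < P.eval 0)
    (H : ℕ → Polynomial ℝ)
    (hH : PowerSeries.mk H *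
        PowerSeries.mk (fun k => Polynomial.C (P.coeff k) +
          if k = r then (Polynomial.X : Polynomial ℝ) else 0) = 1)
    (z : ℝ) (d : ℕ) (hd : d = max n r)
    (c₀ : ℂ) (hc₀ : c₀ ≠ 0) (t : Fin d → ℂ) (hdist : Function.Injective t)
    (hfact : P.map (algebraMap ℝ ℂ) + Polynomial.C (z : ℂ) * Polynomial.X ^ r =
      Polynomial.C c₀ * ∏ k, (Polynomial.X - Polynomial.C (t k))) :
    ∀ m : ℕ, (((H m).eval z : ℝ) : ℂ) =
      -(1 / c₀) * ∑ k, ((t k) ^ (m + 1))⁻¹ *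
        ∏ j ∈ Finset.univ.erase k, (t k - t j)⁻¹ := by
  classical
  set Q : Polynomial ℂ := P.map (algebraMap ℝ ℂ) + Polynomial.C (z : ℂ) * Polynomial.X ^ r
    with hQdef
  -- Q(0) ≠ 0
  have hQ0 : Q.eval 0 ≠ 0 := by
    have : Q.eval 0 = ((P.eval 0 : ℝ) : ℂ) := by
      simp [hQdef, Polynomial.eval_map, hr.ne', Polynomial.eval₂_at_zero,
        Polynomial.coeff_zero_eq_eval_zero]
    rw [this]
    exact_mod_cast (ne_of_gt hP0)
  -- roots are nonzero
  have ht0 : ∀ k, t k ≠ 0 := by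
    intro k hk
    apply hQ0
    have hQk : Q.eval (t k) = 0 := by
      rw [hfact]
      rw [Polynomial.eval_mul, Polynomial.eval_prod]
      rw [Finset.prod_eq_zero (Finset.mem_univ k) (by simp)]
      simp
    rwa [hk] at hQk
  set u : Fin d → ℂˣ := fun k => Units.mk0 (t k) (ht0 k) with hu
  have huval : ∀ k, ((u k : ℂ)) = t k := fun k => rfl
  -- the evaluation homomorphism
  set φ : Polynomial ℝ →+* ℂ := (algebraMap ℝ ℂ).comp (Polynomial.evalRingHom z) with hφ
  -- S * Q = 1
  set S : PowerSeries ℂ := PowerSeries.mk fun m => (((H m).eval z : ℝ) : ℂ) with hS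
  have hmapmk : ∀ f : ℕ → Polynomial ℝ,
      PowerSeries.map φ (PowerSeries.mk f) = PowerSeries.mk fun k => φ (f k) := by
    intro f
    ext m
    simp [PowerSeries.coeff_map]
  have hQcoe : (PowerSeries.mk fun k => φ (Polynomial.C (P.coeff k) +
      if k = r then (Polynomial.X : Polynomial ℝ) else 0)) = (Q : PowerSeries ℂ) := by
    ext m
    simp only [PowerSeries.coeff_mk, Polynomial.coeff_coe, hQdef, Polynomial.coeff_add,
      Polynomial.coeff_map, Polynomial.coeff_C_mul, Polynomial.coeff_X_pow]
    by_cases hm : m = r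
    · subst hm; simp [hφ]
    · simp [hφ, hm, Ne.symm hm]
  have hSQ : S * (Q : PowerSeries ℂ) = 1 := by
    have h := congrArg (PowerSeries.map φ) hH
    rw [map_mul, map_one, hmapmk, hmapmk, hQcoe] at h
    have hSmk : S = PowerSeries.mk fun m => φ (H m) := by
      ext m; simp [hS, hφ]
    rw [hSmk]; exact h
  -- T * Q = 1
  set T : PowerSeries ℂ := PowerSeries.mk fun m => -(1 / c₀) * ∑ k, ((t k) ^ (m + 1))⁻¹ *
        ∏ j ∈ Finset.univ.erase k, (t k - t j)⁻¹ with hT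
  have hTsum : T = ∑ k, PowerSeries.C (-(1 / c₀) * ∏ j ∈ Finset.univ.erase k, (t k - t j)⁻¹)
      * PowerSeries.invUnitsSub (u k) := by
    ext m
    rw [hT, PowerSeries.coeff_mk, map_sum, Finset.mul_sum]
    refine Finset.sum_congr rfl fun k _ => ?_
    rw [PowerSeries.coeff_C_mul, PowerSeries.coeff_invUnitsSub]
    have : (1 /ₚ (u k) ^ (m + 1)) = ((t k) ^ (m + 1))⁻¹ := by
      rw [one_divp, ← inv_pow, Units.val_pow_eq_pow_val]
      rw [show ((u k)⁻¹ : ℂˣ).val = (t k)⁻¹ by simp [hu]]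
      rw [inv_pow]
    rw [this]; ring
  have hinvQ : ∀ k : Fin d, PowerSeries.invUnitsSub (u k) * (Q : PowerSeries ℂ) =
      -(PowerSeries.C c₀) *
        ((∏ j ∈ Finset.univ.erase k, (Polynomial.X - Polynomial.C (t j)) : Polynomial ℂ) :
          PowerSeries ℂ) := by
    intro k
    have h1 : Q = (Polynomial.X - Polynomial.C (t k)) *
        (Polynomial.C c₀ * ∏ j ∈ Finset.univ.erase k, (Polynomial.X - Polynomial.C (t j))) := by
      rw [hfact, ← Finset.mul_prod_erase Finset.univ _ (Finset.mem_univ k)]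
      ring
    have hkey : PowerSeries.invUnitsSub (u k) *
        (((Polynomial.X - Polynomial.C (t k) : Polynomial ℂ)) : PowerSeries ℂ) = -1 := by
      have h2 : (((Polynomial.X - Polynomial.C (t k) : Polynomial ℂ)) : PowerSeries ℂ) =
          -(PowerSeries.C ((u k : ℂ)) - PowerSeries.X) := by
        push_cast
        rw [huval k]
        ring
      rw [h2, mul_neg, PowerSeries.invUnitsSub_mul_sub]
    calc PowerSeries.invUnitsSub (u k) * (Q : PowerSeries ℂ)
        = (PowerSeries.invUnitsSub (u k) *
            (((Polynomial.X - Polynomial.C (t k) : Polynomial ℂ)) : PowerSeries ℂ)) *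
          (((Polynomial.C c₀ * ∏ j ∈ Finset.univ.erase k,
            (Polynomial.X - Polynomial.C (t j)) : Polynomial ℂ)) : PowerSeries ℂ) := by
          rw [h1]; push_cast; ring
      _ = _ := by rw [hkey]; push_cast; ring
  have hdpos : 0 < d := by omega
  have : Nonempty (Fin d) := ⟨⟨0, hdpos⟩⟩
  have huniv : (Finset.univ : Finset (Fin d)).Nonempty := Finset.univ_nonempty
  -- Lagrange identity: the sum of the basis polynomials is 1
  have hlag : (∑ k, Lagrange.basis Finset.univ t k : Polynomial ℂ) = 1 :=
    Lagrange.sum_basis (Function.Injective.injOn hdist) huniv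
  have hTQ : T * (Q : PowerSeries ℂ) = 1 := by
    rw [hTsum, Finset.sum_mul]
    have step : ∀ k : Fin d,
        PowerSeries.C (-(1 / c₀) * ∏ j ∈ Finset.univ.erase k, (t k - t j)⁻¹)
          * PowerSeries.invUnitsSub (u k) * (Q : PowerSeries ℂ)
        = ((Lagrange.basis Finset.univ t k : Polynomial ℂ) : PowerSeries ℂ) := by
      intro k
      rw [mul_assoc, hinvQ k]
      have hb : Lagrange.basis Finset.univ t k =
          Polynomial.C (∏ j ∈ Finset.univ.erase k, (t k - t j)⁻¹) *
            ∏ j ∈ Finset.univ.erase k, (Polynomial.X - Polynomial.C (t j)) := by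
        unfold Lagrange.basis Lagrange.basisDivisor
        rw [Finset.prod_mul_distrib, ← map_prod]
      rw [hb]
      push_cast
      rw [← mul_assoc, show -(PowerSeries.C c₀) = PowerSeries.C (-c₀) from
        (map_neg _ _).symm, ← map_mul]
      congr 1
      field_simp
    rw [Finset.sum_congr rfl (fun k _ => step k)]
    rw [show (∑ k, ((Lagrange.basis Finset.univ t k : Polynomial ℂ) : PowerSeries ℂ))
        = ((∑ k, Lagrange.basis Finset.univ t k : Polynomial ℂ) : PowerSeries ℂ) from
      (map_sum (Polynomial.coeToPowerSeries.ringHom) _ _).symm]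
    rw [hlag, Polynomial.coe_one]
  -- conclude S = T
  have hST : S = T := by
    calc S = S * (T * (Q : PowerSeries ℂ)) := by rw [hTQ, mul_one]
      _ = T * (S * (Q : PowerSeries ℂ)) := by ring
      _ = T := by rw [hSQ, mul_one]
  intro m
  have hcoeff := congrArg (PowerSeries.coeff (R := ℂ) m) hST
  simpa [hS, hT] using hcoeff
end

section
/- Assume r = 1 and n ≥ 3. Then t_b < 0, t_b is a zero of the polynomial P(t) + b t of multiplicity exactly 2, and every other complex zero t of P(t) + b t satisfies |t| > |t_b|. -/
open Polynomial Finset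

private lemma div_sq_add (a b A B : ℝ) (ha : 0 ≤ a) (hb : 0 ≤ b) (hA : 0 < A) (hB : 0 < B) :
    (a + b) ^ 2 / (A + B) ≤ a ^ 2 / A + b ^ 2 / B := by
  rw [div_add_div _ _ hA.ne' hB.ne', div_le_div_iff₀ (by positivity) (by positivity)]
  nlinarith [sq_nonneg (a * B - b * A)]

private lemma mu_mul (z w : ℂ) (hz : Complex.normSq z < 1) (hw : Complex.normSq w < 1) :
    Complex.normSq (1 - z * w) / (1 - Complex.normSq (z * w)) ≤
      Complex.normSq (1 - z) / (1 - Complex.normSq z) +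
        Complex.normSq (1 - w) / (1 - Complex.normSq w) := by
  have hA : (0:ℝ) < 1 - Complex.normSq z := by linarith
  have hW : (0:ℝ) < 1 - Complex.normSq w := by linarith
  rcases eq_or_ne z 0 with rfl | hz0
  · simp only [zero_mul, sub_zero, Complex.normSq_zero, map_one]
    have : 0 ≤ Complex.normSq (1 - w) / (1 - Complex.normSq w) := div_nonneg (Complex.normSq_nonneg _) hW.le
    norm_num
    linarith
  · have hnz : (0:ℝ) < Complex.normSq z := Complex.normSq_pos.2 hz0
    have hB : (0:ℝ) < Complex.normSq z * (1 - Complex.normSq w) := by positivity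
    have hsum : 1 - Complex.normSq (z * w)
        = (1 - Complex.normSq z) + Complex.normSq z * (1 - Complex.normSq w) := by
      rw [Complex.normSq_mul]; ring
    have hpos : (0:ℝ) < 1 - Complex.normSq (z * w) := by rw [hsum]; linarith
    have h1 : Complex.normSq (1 - z * w)
        ≤ (‖1 - z‖ + ‖z‖ * ‖1 - w‖) ^ 2 := by
      have htri : ‖1 - z * w‖
          ≤ ‖1 - z‖ + ‖z‖ * ‖1 - w‖ := by
        calc ‖1 - z * w‖ = ‖(1 - z) + z * (1 - w)‖ := by ring_nf
          _ ≤ ‖1 - z‖ + ‖z * (1 - w)‖ := norm_add_le _ _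
          _ = ‖1 - z‖ + ‖z‖ * ‖1 - w‖ := by rw [norm_mul]
      rw [← Complex.sq_norm]
      have h0 : (0:ℝ) ≤ ‖1 - z * w‖ := norm_nonneg _
      nlinarith
    have key := div_sq_add (‖1 - z‖) (‖z‖ * ‖1 - w‖)
      (1 - Complex.normSq z) (Complex.normSq z * (1 - Complex.normSq w))
      (norm_nonneg _) (by positivity) hA hB
    have e1 : ‖1 - z‖ ^ 2 = Complex.normSq (1 - z) := Complex.sq_norm _
    have e2 : (‖z‖ * ‖1 - w‖) ^ 2 /
        (Complex.normSq z * (1 - Complex.normSq w))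
        = Complex.normSq (1 - w) / (1 - Complex.normSq w) := by
      rw [mul_pow, Complex.sq_norm, Complex.sq_norm]
      rw [mul_div_mul_left _ _ hnz.ne']
    calc Complex.normSq (1 - z * w) / (1 - Complex.normSq (z * w))
        ≤ (‖1 - z‖ + ‖z‖ * ‖1 - w‖) ^ 2 /
            (1 - Complex.normSq (z * w)) := by gcongr
      _ = (‖1 - z‖ + ‖z‖ * ‖1 - w‖) ^ 2 /
            ((1 - Complex.normSq z) + Complex.normSq z * (1 - Complex.normSq w)) := by rw [hsum]
      _ ≤ _ := by rw [← e1, ← e2]; exact key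

private lemma mu_prod {ι : Type*} (f : ι → ℂ) (s : Finset ι) (hs : s.Nonempty)
    (h : ∀ k ∈ s, Complex.normSq (f k) < 1) :
    Complex.normSq (∏ k ∈ s, f k) < 1 ∧
      Complex.normSq (1 - ∏ k ∈ s, f k) / (1 - Complex.normSq (∏ k ∈ s, f k)) ≤
        ∑ k ∈ s, Complex.normSq (1 - f k) / (1 - Complex.normSq (f k)) := by
  induction hs using Finset.Nonempty.cons_induction with
  | singleton a => simp only [Finset.prod_singleton, Finset.sum_singleton]; exact ⟨h a (by simp), le_rfl⟩
  | cons a s ha hs ih =>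
    have h' : ∀ k ∈ s, Complex.normSq (f k) < 1 := fun k hk => h k (Finset.mem_cons_of_mem hk)
    obtain ⟨hp, hq⟩ := ih h'
    have hfa := h a (Finset.mem_cons_self a s)
    rw [Finset.prod_cons, Finset.sum_cons]
    constructor
    · rw [Complex.normSq_mul]
      nlinarith [Complex.normSq_nonneg (f a), Complex.normSq_nonneg (∏ k ∈ s, f k)]
    · exact (mu_mul _ _ hfa hp).trans (by linarith)

private lemma normSq_one_sub_factor (α : ℝ) (u : ℂ) :
    Complex.normSq (1 - ((α:ℂ) * u + 1 - (α:ℂ))) = α ^ 2 * Complex.normSq (1 - u) := by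
  simp only [Complex.normSq_apply, Complex.sub_re, Complex.sub_im, Complex.add_re, Complex.add_im,
    Complex.mul_re, Complex.mul_im, Complex.ofReal_re, Complex.ofReal_im, Complex.one_re,
    Complex.one_im]
  ring

private lemma normSq_factor_identity (α : ℝ) (u : ℂ) :
    1 - Complex.normSq ((α:ℂ) * u + 1 - (α:ℂ))
      = α * ((1 - Complex.normSq u) + (1 - α) * Complex.normSq (1 - u)) := by
  simp only [Complex.normSq_apply, Complex.sub_re, Complex.sub_im, Complex.add_re, Complex.add_im,
    Complex.mul_re, Complex.mul_im, Complex.ofReal_re, Complex.ofReal_im, Complex.one_re,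
    Complex.one_im]
  ring

private lemma normSq_factor_lt_one (α : ℝ) (hα0 : 0 < α) (hα1 : α < 1) (u : ℂ)
    (hu : Complex.normSq u ≤ 1) (hu1 : u ≠ 1) :
    Complex.normSq ((α:ℂ) * u + 1 - (α:ℂ)) < 1 := by
  have hN : 0 < Complex.normSq (1 - u) :=
    Complex.normSq_pos.2 (sub_ne_zero.2 (Ne.symm hu1))
  have h := normSq_factor_identity α u
  nlinarith [mul_pos (mul_pos hα0 (by linarith : (0:ℝ) < 1 - α)) hN,
    mul_nonneg hα0.le (by linarith : (0:ℝ) ≤ 1 - Complex.normSq u)]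

private lemma mu_factor (α : ℝ) (hα0 : 0 < α) (hα1 : α < 1) (u : ℂ)
    (hu : Complex.normSq u < 1) (hu1 : u ≠ 1) :
    Complex.normSq (1 - ((α:ℂ) * u + 1 - (α:ℂ))) /
        (1 - Complex.normSq ((α:ℂ) * u + 1 - (α:ℂ)))
      < α * (Complex.normSq (1 - u) / (1 - Complex.normSq u)) := by
  have hN : 0 < Complex.normSq (1 - u) :=
    Complex.normSq_pos.2 (sub_ne_zero.2 (Ne.symm hu1))
  have hs : 0 < 1 - Complex.normSq u := by linarith
  rw [normSq_one_sub_factor, normSq_factor_identity]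
  have hD : 0 < (1 - Complex.normSq u) + (1 - α) * Complex.normSq (1 - u) := by nlinarith
  have e : α * (Complex.normSq (1 - u) / (1 - Complex.normSq u))
      = (α * Complex.normSq (1 - u)) / (1 - Complex.normSq u) := by ring
  rw [e, div_lt_div_iff₀ (by positivity) hs]
  nlinarith [mul_pos (mul_pos (mul_pos hα0 hα0) hN)
    (mul_pos (by linarith : (0:ℝ) < 1 - α) hN)]

private lemma deriv_prod_linear {ι : Type*} [DecidableEq ι] (τ : ι → ℝ) (s : Finset ι) :
    Polynomial.derivative (∏ k ∈ s, (Polynomial.X - Polynomial.C (τ k))) =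
      ∑ k ∈ s, ∏ j ∈ s.erase k, (Polynomial.X - Polynomial.C (τ j)) := by
  induction s using Finset.induction with
  | empty => simp
  | @insert a s ha ih =>
    rw [Finset.prod_insert ha, derivative_mul, ih, Finset.sum_insert ha, Finset.erase_insert ha]
    have hd : Polynomial.derivative (Polynomial.X - Polynomial.C (τ a)) = 1 := by simp
    rw [hd, one_mul, Finset.mul_sum]
    congr 1
    refine Finset.sum_congr rfl fun k hk => ?_
    have hak : a ≠ k := fun h => ha (h ▸ hk)
    rw [Finset.erase_insert_of_ne hak, Finset.prod_insert (fun h => ha (Finset.mem_of_mem_erase h))]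


/-- If `r = 1` and `n ≥ 3`, then `t_b < 0`, `t_b` is a zero of
`P(t) + b t` of multiplicity exactly `2`, and every other complex zero `t` of `P(t) + b t`
satisfies `|t| > |t_b|`. -/
theorem double_zero_at_tb
    (n r : ℕ) (hn3 : 3 ≤ n) (hr1 : r = 1)
    (P : Polynomial ℝ) (c : ℝ) (hc : c ≠ 0)
    (τv : Fin n → ℝ) (hτmono : Monotone τv) (hτpos : ∀ k, 0 < τv k)
    (hP : P = Polynomial.C c * ∏ k, (Polynomial.X - Polynomial.C (τv k)))
    (hP0 : 0 < P.eval 0)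
    (R : Polynomial ℝ)
    (hR : R = Polynomial.C (r : ℝ) * Polynomial.X ^ (r - 1) * P -
        Polynomial.X ^ r * Polynomial.derivative P)
    (tb : ℝ)
    (htb : tb ≤ 0 ∧ R.eval tb = 0 ∧ ∀ t : ℝ, t ≤ 0 → R.eval t = 0 → t ≤ tb)
    (b : ℝ) (hb : b = -P.eval tb / tb) :
    tb < 0 ∧
    (P + Polynomial.C b * Polynomial.X ^ r).rootMultiplicity tb = 2 ∧
    ∀ w : ℂ, Polynomial.aeval w (P + Polynomial.C b * Polynomial.X ^ r) = 0 →
      w ≠ (tb : ℂ) → |tb| < ‖w‖ := by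
  subst hr1
  obtain ⟨htb0, htbR, -⟩ := htb
  simp only [pow_one, Nat.sub_self, pow_zero, Nat.cast_one, map_one, one_mul, mul_one] at hR ⊢
  have hRt : ∀ t : ℝ, R.eval t = P.eval t - t * (derivative P).eval t := by
    intro t; rw [hR]; simp
  have hPe : ∀ t : ℝ, P.eval t = c * ∏ k, (t - τv k) := by
    intro t; rw [hP]; simp [eval_prod]
  have hP'der : derivative P = C c * ∑ k, ∏ j ∈ Finset.univ.erase k, (X - C (τv j)) := by
    rw [hP, derivative_C_mul, deriv_prod_linear]
  have hP'e : ∀ t : ℝ, (derivative P).eval t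
      = c * ∑ k, ∏ j ∈ Finset.univ.erase k, (t - τv j) := by
    intro t; rw [hP'der]; simp [eval_finset_sum, eval_prod]
  have prodsign : ∀ (s : Finset (Fin n)) (t : ℝ),
      ∏ j ∈ s, (t - τv j) = (-1) ^ s.card * ∏ j ∈ s, (τv j - t) := by
    intro s t
    calc ∏ j ∈ s, (t - τv j) = ∏ j ∈ s, ((-1) * (τv j - t)) :=
          Finset.prod_congr rfl fun j _ => by ring
      _ = (-1) ^ s.card * ∏ j ∈ s, (τv j - t) := by
          rw [Finset.prod_mul_distrib, Finset.prod_const]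
  have hε : 0 < c * (-1) ^ n := by
    have h1 : (0:ℝ) < ∏ k, (τv k - 0) := Finset.prod_pos fun k _ => by linarith [hτpos k]
    have h2 : P.eval 0 = c * (-1) ^ n * ∏ k, (τv k - 0) := by
      rw [hPe, prodsign]; simp [Finset.card_univ]; ring
    rw [h2] at hP0
    rcases mul_pos_iff.1 hP0 with ⟨he, _⟩ | ⟨_, hq⟩
    · exact he
    · linarith
  have hPpos : ∀ t : ℝ, t ≤ 0 → 0 < P.eval t := by
    intro t ht
    have hq : (0:ℝ) < ∏ j, (τv j - t) := Finset.prod_pos fun j _ => by linarith [hτpos j]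
    have h2 : P.eval t = c * (-1) ^ n * ∏ j, (τv j - t) := by
      rw [hPe, prodsign]; simp [Finset.card_univ]; ring
    rw [h2]; exact mul_pos hε hq
  have htbneg : tb < 0 := by
    rcases htb0.lt_or_eq with hlt | heq
    · exact hlt
    · exfalso
      have h1 := hRt tb
      rw [htbR, heq] at h1
      simp at h1
      linarith [hPpos 0 le_rfl, h1]
  have hPtb : 0 < P.eval tb := hPpos tb htb0
  have hbpos : 0 < b := by
    rw [hb]; exact div_pos_iff.2 (Or.inr ⟨by linarith, htbneg⟩)
  have hPtb_eq : P.eval tb = -(b * tb) := by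
    rw [hb, div_mul_cancel₀ _ htbneg.ne, neg_neg]
  set A : Fin n → ℝ := fun k => tb - τv k with hA
  have hAneg : ∀ k, A k < 0 := fun k => by
    have := hτpos k; simp only [hA]; linarith
  have hAlt : ∀ k, A k < tb := fun k => by
    have := hτpos k; simp only [hA]; linarith
  have hα0 : ∀ k, 0 < tb / A k := fun k =>
    div_pos_of_neg_of_neg htbneg (hAneg k)
  have hα1 : ∀ k, tb / A k < 1 := by
    intro k
    have h1 : tb / A k - 1 = τv k / A k := by
      rw [div_sub_one (hAneg k).ne]
      simp only [hA]
      ring_nf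
    have h2 : τv k / A k < 0 := div_neg_of_pos_of_neg (hτpos k) (hAneg k)
    linarith
  have hRtb : P.eval tb = tb * (derivative P).eval tb := by
    have h1 := hRt tb
    rw [htbR] at h1; linarith
  have hprodA : ∏ k, A k = tb * ∑ k, ∏ j ∈ Finset.univ.erase k, A j := by
    have h1 := hRtb
    rw [hPe, hP'e] at h1
    exact mul_left_cancel₀ hc (h1.trans (by ring))
  have hprodAne : ∏ k, A k ≠ 0 :=
    Finset.prod_ne_zero_iff.2 fun k _ => (hAneg k).ne
  have hsum1 : ∑ k, tb / A k = 1 := by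
    have h2 : ∑ k, tb / A k = (∑ k, tb * ∏ j ∈ Finset.univ.erase k, A j) / ∏ k, A k := by
      rw [Finset.sum_div]
      refine Finset.sum_congr rfl fun k _ => ?_
      rw [eq_div_iff hprodAne]
      rw [← Finset.mul_prod_erase _ _ (Finset.mem_univ k)]
      have hAk : A k ≠ 0 := (hAneg k).ne
      field_simp
    rw [h2, ← Finset.mul_sum, ← hprodA, div_self hprodAne]
  -- multiplicity part
  have hQ0 : (P + C b * X).eval 0 ≠ 0 := by
    simp only [eval_add, eval_mul, eval_C, eval_X, mul_zero, add_zero]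
    exact hP0.ne'
  have hQne : (P + C b * X) ≠ 0 := fun h => hQ0 (by rw [h]; simp)
  have hQtb : (P + C b * X).IsRoot tb := by
    simp only [IsRoot, eval_add, eval_mul, eval_C, eval_X, hPtb_eq]; ring
  have hQ'd : derivative (P + C b * X) = derivative P + C b := by
    simp [derivative_add, derivative_C_mul]
  have hP'tb : (derivative P).eval tb = -b := by
    have h2 : tb * (derivative P).eval tb = tb * (-b) := by
      rw [← hRtb, hPtb_eq]; ring
    exact mul_left_cancel₀ htbneg.ne h2
  have hQ'tb : (derivative (P + C b * X)).IsRoot tb := by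
    rw [hQ'd]; simp [IsRoot, hP'tb]
  have hQ''d : derivative (derivative (P + C b * X)) = derivative (derivative P) := by
    rw [hQ'd]; simp [derivative_add]
  have hP''der : derivative (derivative P)
      = C c * ∑ k, ∑ j ∈ Finset.univ.erase k,
          ∏ l ∈ (Finset.univ.erase k).erase j, (X - C (τv l)) := by
    rw [hP'der, derivative_C_mul, derivative_sum]
    congr 1
    exact Finset.sum_congr rfl fun k _ => deriv_prod_linear τv _
  have hP''pos : 0 < (derivative (derivative P)).eval tb := by
    have hP''e : (derivative (derivative P)).eval tb
        = c * ∑ k, ∑ j ∈ Finset.univ.erase k,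
            ∏ l ∈ (Finset.univ.erase k).erase j, (tb - τv l) := by
      rw [hP''der]; simp [eval_finset_sum, eval_prod]
    have hsign : ((-1:ℝ)) ^ (n - 2) = (-1) ^ n := by
      have h2 : n - 2 + 2 = n := by omega
      calc ((-1:ℝ)) ^ (n-2) = ((-1:ℝ)) ^ (n-2) * ((-1:ℝ))^2 := by norm_num
        _ = (-1) ^ n := by rw [← pow_add, h2]
    have hinner : ∀ k, ∑ j ∈ Finset.univ.erase k,
        ∏ l ∈ (Finset.univ.erase k).erase j, (tb - τv l)
        = (-1) ^ n * ∑ j ∈ Finset.univ.erase k,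
            ∏ l ∈ (Finset.univ.erase k).erase j, (τv l - tb) := by
      intro k
      rw [Finset.mul_sum]
      refine Finset.sum_congr rfl fun j hj => ?_
      rw [prodsign, Finset.card_erase_of_mem hj, Finset.card_erase_of_mem (Finset.mem_univ k)]
      rw [Finset.card_univ, Fintype.card_fin]
      have : n - 1 - 1 = n - 2 := by omega
      rw [this, hsign]
    have hT : 0 < ∑ k, ∑ j ∈ Finset.univ.erase k,
        ∏ l ∈ (Finset.univ.erase k).erase j, (τv l - tb) := by
      have hne : (Finset.univ : Finset (Fin n)).Nonempty := by
        refine ⟨⟨0, by omega⟩, Finset.mem_univ _⟩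
      refine Finset.sum_pos (fun k _ => ?_) hne
      have hkne : (Finset.univ.erase k).Nonempty := by
        rw [← Finset.card_pos, Finset.card_erase_of_mem (Finset.mem_univ k),
          Finset.card_univ, Fintype.card_fin]
        omega
      refine Finset.sum_pos (fun j _ => ?_) hkne
      exact Finset.prod_pos fun l _ => by linarith [hτpos l]
    rw [hP''e]
    have h3 : ∑ k, ∑ j ∈ Finset.univ.erase k,
        ∏ l ∈ (Finset.univ.erase k).erase j, (tb - τv l)
        = (-1)^n * ∑ k, ∑ j ∈ Finset.univ.erase k,
            ∏ l ∈ (Finset.univ.erase k).erase j, (τv l - tb) := by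
      rw [Finset.mul_sum]
      exact Finset.sum_congr rfl fun k _ => hinner k
    rw [h3, ← mul_assoc]
    exact mul_pos hε hT
  have hQ''tb_ne : (derivative (derivative (P + C b * X))).eval tb ≠ 0 := by
    rw [hQ''d]; exact hP''pos.ne'
  have hQ''ne : derivative (derivative (P + C b * X)) ≠ 0 :=
    fun h => hQ''tb_ne (by rw [h]; simp)
  have hQ'ne : derivative (P + C b * X) ≠ 0 :=
    fun h => hQ''ne (by rw [h]; simp)
  have hmult : (P + C b * X).rootMultiplicity tb = 2 := by
    have m1 := derivative_rootMultiplicity_of_root hQtb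
    have m2 := derivative_rootMultiplicity_of_root hQ'tb
    have hmpos := (rootMultiplicity_pos hQne).2 hQtb
    have hm1pos := (rootMultiplicity_pos hQ'ne).2 hQ'tb
    have hm2zero : (derivative (derivative (P + C b * X))).rootMultiplicity tb = 0 :=
      rootMultiplicity_eq_zero hQ''tb_ne
    omega
  refine ⟨htbneg, hmult, ?_⟩
  intro w hw hwne
  by_contra hcon
  push_neg at hcon
  have htbC : (tb : ℂ) ≠ 0 := Complex.ofReal_ne_zero.2 htbneg.ne
  have hcC : (c : ℂ) ≠ 0 := Complex.ofReal_ne_zero.2 hc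
  have hbC : (b : ℂ) ≠ 0 := Complex.ofReal_ne_zero.2 hbpos.ne'
  have hPaw : Polynomial.aeval w P = (c:ℂ) * ∏ k, (w - (τv k : ℂ)) := by
    rw [hP, map_mul, map_prod]
    simp
  have hweq : (c:ℂ) * ∏ k, (w - (τv k:ℂ)) = -((b:ℂ) * w) := by
    rw [map_add, map_mul, aeval_C, aeval_X, hPaw] at hw
    simp only [Complex.coe_algebraMap] at hw
    linear_combination hw
  have hprodCA : (c:ℂ) * ∏ k, ((A k : ℂ)) = -((b:ℂ) * (tb:ℂ)) := by
    have hreal : c * ∏ k, A k = -(b * tb) := by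
      have h := hPtb_eq
      rw [hPe] at h
      simpa [hA] using h
    have := congrArg (fun x : ℝ => (x : ℂ)) hreal
    push_cast at this
    exact this
  set u : ℂ := w / tb with hu
  set m' : Fin n → ℂ := fun k => ((tb / A k : ℝ):ℂ) * u + 1 - ((tb/A k : ℝ):ℂ) with hm'
  have hmk : ∀ k, m' k = (w - (τv k:ℂ)) / ((A k:ℂ)) := by
    intro k
    have hAC : (tb:ℂ) - (τv k:ℂ) ≠ 0 := by
      have h := Complex.ofReal_ne_zero.2 (hAneg k).ne
      simp only [hA] at h
      push_cast at h
      exact h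
    simp only [hm', hu, hA]
    push_cast
    field_simp [hAC, htbC]
    ring
  have hprodu : ∏ k, m' k = u := by
    have h1 : ∏ k, (w - (τv k:ℂ)) = -((b:ℂ)*w) / c := by
      rw [eq_div_iff hcC]; linear_combination hweq
    have h2 : ∏ k, ((A k : ℂ)) = -((b:ℂ)*(tb:ℂ)) / c := by
      rw [eq_div_iff hcC]; linear_combination hprodCA
    calc ∏ k, m' k = ∏ k, ((w - (τv k:ℂ)) / ((A k:ℂ))) :=
          Finset.prod_congr rfl fun k _ => hmk k
      _ = (∏ k, (w - (τv k:ℂ))) / ∏ k, ((A k:ℂ)) := by rw [Finset.prod_div_distrib]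
      _ = u := by
          rw [h1, h2, hu]
          field_simp
  have hnormu : Complex.normSq u ≤ 1 := by
    rw [hu, Complex.normSq_div]
    have h1 : Complex.normSq w ≤ Complex.normSq (tb:ℂ) := by
      rw [← Complex.sq_norm, ← Complex.sq_norm]
      have h2 : ‖(tb:ℂ)‖ = |tb| := by simp
      rw [h2]
      exact pow_le_pow_left₀ (norm_nonneg w) hcon 2
    exact div_le_one_of_le₀ h1 (Complex.normSq_nonneg _)
  have hune : u ≠ 1 := by
    intro h
    exact hwne ((div_eq_one_iff_eq htbC).1 (hu ▸ h))
  have hfaclt : ∀ k, Complex.normSq (m' k) < 1 := fun k =>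
    normSq_factor_lt_one _ (hα0 k) (hα1 k) u hnormu hune
  have huniv_ne : (Finset.univ : Finset (Fin n)).Nonempty :=
    ⟨⟨0, by omega⟩, Finset.mem_univ _⟩
  rcases lt_or_eq_of_le hnormu with hlt | heqq
  · obtain ⟨hp1, hp2⟩ := mu_prod m' Finset.univ huniv_ne (fun k _ => hfaclt k)
    rw [hprodu] at hp2
    have hstrict : ∀ k ∈ Finset.univ, Complex.normSq (1 - m' k) / (1 - Complex.normSq (m' k))
        < (tb / A k) * (Complex.normSq (1 - u) / (1 - Complex.normSq u)) := fun k _ =>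
      mu_factor _ (hα0 k) (hα1 k) u hlt hune
    have hsum_lt := Finset.sum_lt_sum_of_nonempty huniv_ne hstrict
    have hsum_eq : ∑ k, (tb / A k) * (Complex.normSq (1-u) / (1 - Complex.normSq u))
        = Complex.normSq (1-u) / (1 - Complex.normSq u) := by
      rw [← Finset.sum_mul, hsum1, one_mul]
    rw [hsum_eq] at hsum_lt
    linarith
  · have hmap : Complex.normSq (∏ k, m' k) = ∏ k, Complex.normSq (m' k) :=
      map_prod Complex.normSq _ _
    set k0 : Fin n := ⟨0, by omega⟩
    have hsplit : ∏ k, Complex.normSq (m' k)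
        = Complex.normSq (m' k0) * ∏ k ∈ Finset.univ.erase k0, Complex.normSq (m' k) :=
      (Finset.mul_prod_erase _ _ (Finset.mem_univ k0)).symm
    have hle1 : ∏ k ∈ Finset.univ.erase k0, Complex.normSq (m' k) ≤ 1 :=
      Finset.prod_le_one (fun k _ => Complex.normSq_nonneg _) (fun k _ => (hfaclt k).le)
    have hge0 : (0:ℝ) ≤ ∏ k ∈ Finset.univ.erase k0, Complex.normSq (m' k) :=
      Finset.prod_nonneg fun k _ => Complex.normSq_nonneg _
    have hlt1 : ∏ k, Complex.normSq (m' k) < 1 := by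
      rw [hsplit]
      nlinarith [hfaclt k0, Complex.normSq_nonneg (m' k0)]
    rw [hprodu, heqq] at hmap
    linarith
end
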